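/- arXiv:1901.11052 — 5 statements merged into one kernel-verified Lean document; each statement's English description precedes it below -/
import Mathlib

section
/- Let N_{r,γ,μ} have the generalized negative binomial distribution with parameters r > 0, γ > 0, μ > 0. Then as μ → 0, the rescaled random variable μ^{1/γ} N_{r,γ,μ} converges in distribution to G^{1/γ}, where G has the gamma distribution with shape r and rate 1. -/
open MeasureTheory Real Set Filter Topology

noncomputable section

/-- The generalized gamma density g*(z; r, γ, μ). -/
def ggPdf (r γ μ x : ℝ) : ℝ :=
  if 0 < x then (γ * μ ^ r / Real.Gamma r) * x ^ (γ * r - 1) * Real.exp (-(μ * x ^ γ)) else 0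

/-- The generalized negative binomial probability mass function. -/
def gnbP (r γ μ : ℝ) (k : ℕ) : ℝ :=
  (1 / (k.factorial : ℝ)) * ∫ z in Set.Ioi (0 : ℝ), Real.exp (-z) * z ^ k * ggPdf r γ μ z

namespace GnbAux

lemma exp_tsum (x : ℝ) : Real.exp x = ∑' n : ℕ, x ^ n / (n.factorial : ℝ) := by
  rw [Real.exp_eq_exp_ℝ, NormedSpace.exp_eq_tsum_div]

/-- Partial Poisson cdf. -/
def S (M : ℕ) (y : ℝ) : ℝ := ∑ k ∈ Finset.range (M + 1), Real.exp (-y) * y ^ k / (k.factorial : ℝ)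

lemma S_nonneg {M : ℕ} {y : ℝ} (hy : 0 ≤ y) : 0 ≤ S M y :=
  Finset.sum_nonneg fun k _ => by positivity

lemma S_eq (M : ℕ) (y : ℝ) :
    S M y = Real.exp (-y) * ∑ k ∈ Finset.range (M + 1), y ^ k / (k.factorial : ℝ) := by
  rw [Finset.mul_sum]; exact Finset.sum_congr rfl fun k _ => by ring

lemma S_le_one {M : ℕ} {y : ℝ} (hy : 0 ≤ y) : S M y ≤ 1 := by
  rw [S_eq]
  calc Real.exp (-y) * ∑ k ∈ Finset.range (M + 1), y ^ k / (k.factorial : ℝ)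
      ≤ Real.exp (-y) * Real.exp y := by
        gcongr; exact Real.sum_le_exp_of_nonneg hy _
    _ = 1 := by rw [← Real.exp_add]; simp

lemma exp_le_quad {s : ℝ} (h : |s| ≤ 1) : Real.exp s ≤ 1 + s + s ^ 2 := by
  have := Real.exp_bound h (n := 2) (by norm_num)
  have h2 : ∑ i ∈ Finset.range 2, s ^ i / (i.factorial : ℝ) = 1 + s := by
    simp [Finset.sum_range_succ]
  rw [h2] at this
  have hb : ((Nat.succ 2 : ℕ) : ℝ) / ((Nat.factorial 2 : ℕ) * (2:ℕ)) = 3/4 := by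
    norm_num [Nat.factorial]
  rw [hb] at this
  have := abs_le.mp this
  nlinarith [sq_abs s]

lemma S_le {M : ℕ} {y s : ℝ} (hy : 0 ≤ y) (hs : 0 ≤ s) :
    S M y ≤ Real.exp (y * Real.exp (-s) - y + s * M) := by
  have h1 : S M y ≤ Real.exp (-y) * (Real.exp (s * M) * Real.exp (y * Real.exp (-s))) := by
    rw [S_eq]
    have hterm : ∀ k ∈ Finset.range (M + 1),
        y ^ k / (k.factorial : ℝ) ≤ Real.exp (s * M) * ((y * Real.exp (-s)) ^ k / k.factorial) := by
      intro k hk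
      have hkM : (k : ℝ) ≤ M := by
        exact_mod_cast Nat.lt_succ_iff.mp (Finset.mem_range.mp hk)
      have : (y * Real.exp (-s)) ^ k = y ^ k * Real.exp (-(s * k)) := by
        rw [mul_pow, ← Real.exp_nat_mul]; ring_nf
      rw [this]
      have hge : (1:ℝ) ≤ Real.exp (s * M) * Real.exp (-(s * k)) := by
        rw [← Real.exp_add, ← Real.exp_zero]
        apply Real.exp_le_exp.mpr; nlinarith
      have hnn : 0 ≤ y ^ k / (k.factorial : ℝ) := by positivity
      calc y ^ k / (k.factorial : ℝ) = 1 * (y ^ k / k.factorial) := (one_mul _).symm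
        _ ≤ (Real.exp (s * M) * Real.exp (-(s * k))) * (y ^ k / k.factorial) := by
            exact mul_le_mul_of_nonneg_right hge hnn
        _ = Real.exp (s * M) * (y ^ k * Real.exp (-(s * k)) / k.factorial) := by ring
    calc Real.exp (-y) * ∑ k ∈ Finset.range (M + 1), y ^ k / (k.factorial : ℝ)
        ≤ Real.exp (-y) * ∑ k ∈ Finset.range (M + 1),
            Real.exp (s * M) * ((y * Real.exp (-s)) ^ k / k.factorial) :=
          mul_le_mul_of_nonneg_left (Finset.sum_le_sum hterm) (Real.exp_pos _).le
      _ = Real.exp (-y) * (Real.exp (s * M) *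
            ∑ k ∈ Finset.range (M + 1), (y * Real.exp (-s)) ^ k / k.factorial) := by
          rw [← Finset.mul_sum]
      _ ≤ Real.exp (-y) * (Real.exp (s * M) * Real.exp (y * Real.exp (-s))) := by
          gcongr
          exact Real.sum_le_exp_of_nonneg (by positivity) _
  calc S M y ≤ _ := h1
    _ = Real.exp (y * Real.exp (-s) - y + s * M) := by
        rw [← Real.exp_add, ← Real.exp_add]; ring_nf

lemma tail_le {M : ℕ} {y s : ℝ} (hy : 0 ≤ y) (hs : 0 ≤ s) :
    1 - S M y ≤ Real.exp (y * Real.exp s - y - s * (M + 1)) := by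
  have hsum : Summable (fun k : ℕ => y ^ k / (k.factorial : ℝ)) :=
    Real.summable_pow_div_factorial y
  have hsum2 : Summable (fun k : ℕ => (y * Real.exp s) ^ k / (k.factorial : ℝ)) :=
    Real.summable_pow_div_factorial _
  have hsplit : (∑ k ∈ Finset.range (M + 1), y ^ k / (k.factorial : ℝ))
      + ∑' i : ℕ, y ^ (i + (M + 1)) / ((i + (M + 1)).factorial : ℝ)
      = ∑' k : ℕ, y ^ k / (k.factorial : ℝ) := Summable.sum_add_tsum_nat_add (M + 1) hsum
  have hsplit2 : (∑ k ∈ Finset.range (M + 1), (y * Real.exp s) ^ k / (k.factorial : ℝ))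
      + ∑' i : ℕ, (y * Real.exp s) ^ (i + (M + 1)) / ((i + (M + 1)).factorial : ℝ)
      = ∑' k : ℕ, (y * Real.exp s) ^ k / (k.factorial : ℝ) := Summable.sum_add_tsum_nat_add (M + 1) hsum2
  have h2 : Real.exp y - ∑ k ∈ Finset.range (M + 1), y ^ k / (k.factorial : ℝ)
      = ∑' i : ℕ, y ^ (i + (M + 1)) / ((i + (M + 1)).factorial : ℝ) := by
    rw [exp_tsum y, ← hsplit]; ring
  have hS : 1 - S M y
      = Real.exp (-y) * ∑' i : ℕ, y ^ (i + (M + 1)) / ((i + (M + 1)).factorial : ℝ) := by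
    have h1 : Real.exp (-y) * Real.exp y = 1 := by rw [← Real.exp_add]; simp
    rw [S_eq, ← h2, mul_sub, h1]
  rw [hS]
  have htail : (∑' i : ℕ, y ^ (i + (M + 1)) / ((i + (M + 1)).factorial : ℝ))
      ≤ Real.exp (-(s * (M + 1))) * Real.exp (y * Real.exp s) := by
    have hstep : ∀ i : ℕ, y ^ (i + (M + 1)) / ((i + (M + 1)).factorial : ℝ)
        ≤ Real.exp (-(s * (M + 1))) * ((y * Real.exp s) ^ (i + (M + 1)) / ((i + (M + 1)).factorial : ℝ)) := by
      intro i
      set n := i + (M + 1) with hn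
      have hpow : (y * Real.exp s) ^ n = y ^ n * Real.exp (s * n) := by
        rw [mul_pow, ← Real.exp_nat_mul]; ring_nf
      rw [hpow]
      have hge : (1:ℝ) ≤ Real.exp (-(s * (M + 1))) * Real.exp (s * n) := by
        rw [← Real.exp_add]
        apply Real.one_le_exp
        have : ((M:ℝ) + 1) ≤ (n : ℝ) := by
          have : (M + 1 : ℕ) ≤ n := by omega
          exact_mod_cast this
        nlinarith
      have hnn : 0 ≤ y ^ n / ((n.factorial : ℝ)) := by positivity
      calc y ^ n / ((n.factorial : ℝ)) = 1 * (y ^ n / n.factorial) := (one_mul _).symm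
        _ ≤ (Real.exp (-(s * (M + 1))) * Real.exp (s * n)) * (y ^ n / n.factorial) :=
            mul_le_mul_of_nonneg_right hge hnn
        _ = Real.exp (-(s * (M + 1))) * (y ^ n * Real.exp (s * n) / n.factorial) := by ring
    have hsumL : Summable (fun i : ℕ => y ^ (i + (M + 1)) / ((i + (M + 1)).factorial : ℝ)) :=
      (summable_nat_add_iff (f := fun k : ℕ => y ^ k / (k.factorial : ℝ)) (M + 1)).mpr hsum
    have hsumR : Summable (fun i : ℕ =>
        Real.exp (-(s * (M + 1))) * ((y * Real.exp s) ^ (i + (M + 1)) / ((i + (M + 1)).factorial : ℝ))) :=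
      ((summable_nat_add_iff (f := fun k : ℕ => (y * Real.exp s) ^ k / (k.factorial : ℝ)) (M + 1)).mpr hsum2).mul_left _
    calc (∑' i : ℕ, y ^ (i + (M + 1)) / ((i + (M + 1)).factorial : ℝ))
        ≤ ∑' i : ℕ, Real.exp (-(s * (M + 1))) *
            ((y * Real.exp s) ^ (i + (M + 1)) / ((i + (M + 1)).factorial : ℝ)) :=
          Summable.tsum_le_tsum hstep hsumL hsumR
      _ = Real.exp (-(s * (M + 1))) *
            ∑' i : ℕ, (y * Real.exp s) ^ (i + (M + 1)) / ((i + (M + 1)).factorial : ℝ) :=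
          tsum_mul_left
      _ ≤ Real.exp (-(s * (M + 1))) * Real.exp (y * Real.exp s) := by
          gcongr
          have hpart : 0 ≤ ∑ k ∈ Finset.range (M + 1), (y * Real.exp s) ^ k / (k.factorial : ℝ) :=
            Finset.sum_nonneg fun k _ => by positivity
          rw [exp_tsum (y * Real.exp s), ← hsplit2]
          linarith
  calc Real.exp (-y) * ∑' i : ℕ, y ^ (i + (M + 1)) / ((i + (M + 1)).factorial : ℝ)
      ≤ Real.exp (-y) * (Real.exp (-(s * (M + 1))) * Real.exp (y * Real.exp s)) :=
        mul_le_mul_of_nonneg_left htail (Real.exp_pos _).le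
    _ = Real.exp (y * Real.exp s - y - s * (M + 1)) := by
        rw [← Real.exp_add, ← Real.exp_add]; ring_nf

lemma exp_neg_tendsto {ι} {l : Filter ι} {c : ι → ℝ} (hc : Tendsto c l atTop) {a : ℝ}
    (ha : 0 < a) : Tendsto (fun i => Real.exp (-(c i * a))) l (𝓝 0) := by
  exact Real.tendsto_exp_atBot.comp (tendsto_neg_atTop_atBot.comp (hc.atTop_mul_const ha))

lemma S_one {ι} {l : Filter ι} {c : ι → ℝ} {M : ι → ℕ} {x t : ℝ} (hc : Tendsto c l atTop)
    (hM : ∀ᶠ i in l, x * c i ≤ (M i : ℝ) + 1) (ht : 0 < t) (htx : t < x) :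
    Tendsto (fun i => S (M i) (c i * t)) l (𝓝 1) := by
  set s : ℝ := min 1 ((x - t) / (2 * t)) with hs
  have hs0 : 0 < s := lt_min one_pos (div_pos (by linarith) (by positivity))
  have hs1 : s ≤ 1 := min_le_left _ _
  have hts : t * s ≤ (x - t) / 2 := by
    have := min_le_right 1 ((x - t) / (2 * t))
    calc t * s ≤ t * ((x - t) / (2 * t)) := by
          exact mul_le_mul_of_nonneg_left this ht.le
      _ = (x - t) / 2 := by field_simp
  have hB : Tendsto (fun i => 1 - Real.exp (-(c i * (s * (x - t) / 2)))) l (𝓝 1) := by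
    have ha : 0 < s * (x - t) / 2 := div_pos (mul_pos hs0 (by linarith)) two_pos
    have := (exp_neg_tendsto hc ha).const_sub 1
    simpa using this
  have hup : ∀ᶠ i in l, S (M i) (c i * t) ≤ 1 := by
    filter_upwards [hc.eventually_ge_atTop 0] with i hci
    exact S_le_one (mul_nonneg hci ht.le)
  have hlow : ∀ᶠ i in l, 1 - Real.exp (-(c i * (s * (x - t) / 2))) ≤ S (M i) (c i * t) := by
    filter_upwards [hc.eventually_ge_atTop 0, hM] with i hci hMi
    have h1 : 1 - S (M i) (c i * t)
        ≤ Real.exp (c i * t * Real.exp s - c i * t - s * (M i + 1)) :=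
      tail_le (mul_nonneg hci ht.le) hs0.le
    have h2 : c i * t * Real.exp s - c i * t - s * (M i + 1) ≤ -(c i * (s * (x - t) / 2)) := by
      have he : Real.exp s ≤ 1 + s + s ^ 2 := exp_le_quad (by rw [abs_of_nonneg hs0.le]; exact hs1)
      have hMx : s * (x * c i) ≤ s * ((M i : ℝ) + 1) := mul_le_mul_of_nonneg_left hMi hs0.le
      have hq : c i * t * Real.exp s - c i * t ≤ c i * (t * s + t * s ^ 2) := by
        have : t * Real.exp s - t ≤ t * s + t * s ^ 2 := by nlinarith
        nlinarith
      have key : t * s + t * s ^ 2 - s * x ≤ -(s * (x - t) / 2) := by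
        nlinarith [mul_le_mul_of_nonneg_left hts hs0.le]
      have h4 := mul_le_mul_of_nonneg_left key hci
      linarith [h4, hq, hMx]
    calc 1 - Real.exp (-(c i * (s * (x - t) / 2)))
        ≤ 1 - Real.exp (c i * t * Real.exp s - c i * t - s * (M i + 1)) := by
          have := Real.exp_le_exp.mpr h2; linarith
      _ ≤ S (M i) (c i * t) := by linarith
  exact tendsto_of_tendsto_of_tendsto_of_le_of_le' hB tendsto_const_nhds hlow hup

lemma S_zero {ι} {l : Filter ι} {c : ι → ℝ} {M : ι → ℕ} {x t : ℝ} (hc : Tendsto c l atTop)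
    (hM : ∀ᶠ i in l, (M i : ℝ) ≤ x * c i) (hx : 0 ≤ x) (htx : x < t) :
    Tendsto (fun i => S (M i) (c i * t)) l (𝓝 0) := by
  have ht : 0 < t := lt_of_le_of_lt hx htx
  set s : ℝ := min 1 ((t - x) / (2 * t)) with hs
  have hs0 : 0 < s := lt_min one_pos (div_pos (by linarith) (by positivity))
  have hs1 : s ≤ 1 := min_le_left _ _
  have hts : t * s ≤ (t - x) / 2 := by
    have := min_le_right 1 ((t - x) / (2 * t))
    calc t * s ≤ t * ((t - x) / (2 * t)) := mul_le_mul_of_nonneg_left this ht.le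
      _ = (t - x) / 2 := by field_simp
  have hB : Tendsto (fun i => Real.exp (-(c i * (s * (t - x) / 2)))) l (𝓝 0) :=
    exp_neg_tendsto hc (div_pos (mul_pos hs0 (by linarith)) two_pos)
  have hlow : ∀ᶠ i in l, 0 ≤ S (M i) (c i * t) := by
    filter_upwards [hc.eventually_ge_atTop 0] with i hci
    exact S_nonneg (mul_nonneg hci ht.le)
  have hup : ∀ᶠ i in l, S (M i) (c i * t) ≤ Real.exp (-(c i * (s * (t - x) / 2))) := by
    filter_upwards [hc.eventually_ge_atTop 0, hM] with i hci hMi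
    have h1 : S (M i) (c i * t)
        ≤ Real.exp (c i * t * Real.exp (-s) - c i * t + s * (M i)) :=
      S_le (mul_nonneg hci ht.le) hs0.le
    have h2 : c i * t * Real.exp (-s) - c i * t + s * (M i) ≤ -(c i * (s * (t - x) / 2)) := by
      have he : Real.exp (-s) ≤ 1 + (-s) + (-s) ^ 2 :=
        exp_le_quad (by rw [abs_of_nonpos (by linarith)]; simpa using hs1)
      have hMx : s * (M i : ℝ) ≤ s * (x * c i) := mul_le_mul_of_nonneg_left hMi hs0.le
      have hq : c i * t * Real.exp (-s) - c i * t ≤ c i * (-(t * s) + t * s ^ 2) := by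
        have : t * Real.exp (-s) - t ≤ -(t * s) + t * s ^ 2 := by nlinarith
        nlinarith
      have key : -(t * s) + t * s ^ 2 + s * x ≤ -(s * (t - x) / 2) := by
        nlinarith [mul_le_mul_of_nonneg_left hts hs0.le]
      have h4 := mul_le_mul_of_nonneg_left key hci
      linarith [h4, hq, hMx]
    exact h1.trans (Real.exp_le_exp.mpr h2)
  exact tendsto_of_tendsto_of_tendsto_of_le_of_le' tendsto_const_nhds hB hlow hup

section MT

variable {r γ : ℝ}

lemma gg_meas (r γ μ : ℝ) : Measurable (ggPdf r γ μ) := by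
  unfold ggPdf
  exact Measurable.ite (measurableSet_lt measurable_const measurable_id) (by fun_prop)
    measurable_const

lemma gg_nonneg (hr : 0 < r) (hγ : 0 < γ) {μ : ℝ} (hμ : 0 ≤ μ) (x : ℝ) :
    0 ≤ ggPdf r γ μ x := by
  unfold ggPdf
  split_ifs with h
  · have h1 : 0 < Real.Gamma r := Real.Gamma_pos_of_pos hr
    have h2 : (0:ℝ) ≤ μ ^ r := Real.rpow_nonneg hμ r
    have h3 : (0:ℝ) ≤ x ^ (γ * r - 1) := Real.rpow_nonneg h.le _
    positivity
  · exact le_rfl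

lemma base_int (hr : 0 < r) (hγ : 0 < γ) :
    IntegrableOn (fun t : ℝ => t ^ (γ * r - 1) * Real.exp (-t ^ γ)) (Ioi 0) := by
  have hg : IntegrableOn (fun u : ℝ => u ^ (r - 1) * Real.exp (-u)) (Ioi 0) :=
    (Real.GammaIntegral_convergent hr).congr_fun (fun u _ => by ring) measurableSet_Ioi
  have h2 := (integrableOn_Ioi_comp_rpow_iff'
    (f := fun u : ℝ => u ^ (r - 1) * Real.exp (-u)) (p := γ) hγ.ne').mpr hg
  refine h2.congr_fun (fun t ht => ?_) measurableSet_Ioi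
  have ht0 : (0:ℝ) < t := ht
  simp only [smul_eq_mul]
  have e1 : ((t : ℝ) ^ γ) ^ (r - 1) = t ^ (γ * (r - 1)) := (Real.rpow_mul ht0.le γ (r-1)).symm
  rw [e1, ← mul_assoc, ← Real.rpow_add ht0]
  congr 2
  ring

lemma gg1_int (hr : 0 < r) (hγ : 0 < γ) : IntegrableOn (ggPdf r γ 1) (Ioi 0) := by
  have h : IntegrableOn (fun t : ℝ => γ * (1:ℝ) ^ r / Real.Gamma r *
      (t ^ (γ * r - 1) * Real.exp (-t ^ γ))) (Ioi 0) := (base_int hr hγ).const_mul _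
  refine IntegrableOn.congr_fun h (fun t ht => ?_) measurableSet_Ioi
  have ht0 : (0:ℝ) < t := ht
  rw [ggPdf, if_pos ht0, one_mul]
  ring

lemma term_int (hr : 0 < r) (hγ : 0 < γ) {μ : ℝ} (hμ : 0 < μ) (k : ℕ) :
    IntegrableOn (fun z : ℝ => Real.exp (-z) * z ^ k * ggPdf r γ μ z) (Ioi 0) := by
  have hs : (0:ℝ) < (k : ℝ) + γ * r := by positivity
  have hb : IntegrableOn
      (fun z : ℝ => (γ * μ ^ r / Real.Gamma r) * (Real.exp (-z) * z ^ ((k:ℝ) + γ * r - 1)))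
      (Ioi 0) := (Real.GammaIntegral_convergent hs).const_mul _
  refine Integrable.mono' hb ?_ ?_
  · exact ((Measurable.mul (by fun_prop) (gg_meas r γ μ))).aestronglyMeasurable
  · filter_upwards [ae_restrict_mem measurableSet_Ioi] with z hz
    have hz0 : (0:ℝ) < z := hz
    have hΓ : 0 < Real.Gamma r := Real.Gamma_pos_of_pos hr
    have hμr : (0:ℝ) < μ ^ r := Real.rpow_pos_of_pos hμ r
    have hnn : 0 ≤ Real.exp (-z) * z ^ k * ggPdf r γ μ z := by
      have := gg_nonneg hr hγ hμ.le z
      positivity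
    rw [Real.norm_eq_abs, abs_of_nonneg hnn, ggPdf, if_pos hz0]
    have hexp : Real.exp (-(μ * z ^ γ)) ≤ 1 := by
      rw [Real.exp_le_one_iff]
      have : (0:ℝ) ≤ μ * z ^ γ := mul_nonneg hμ.le (Real.rpow_nonneg hz0.le _)
      linarith
    have hzk : (z:ℝ) ^ k * z ^ (γ * r - 1) = z ^ ((k:ℝ) + γ * r - 1) := by
      rw [← Real.rpow_natCast z k, ← Real.rpow_add hz0]
      congr 1
      ring
    calc Real.exp (-z) * z ^ k *
          ((γ * μ ^ r / Real.Gamma r) * z ^ (γ * r - 1) * Real.exp (-(μ * z ^ γ)))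
        ≤ Real.exp (-z) * z ^ k * ((γ * μ ^ r / Real.Gamma r) * z ^ (γ * r - 1) * 1) := by
          have h0 : (0:ℝ) ≤ Real.exp (-z) * z ^ k := by positivity
          have h1 : (0:ℝ) ≤ (γ * μ ^ r / Real.Gamma r) * z ^ (γ * r - 1) := by
            have := Real.rpow_nonneg hz0.le (γ * r - 1); positivity
          exact mul_le_mul_of_nonneg_left (mul_le_mul_of_nonneg_left hexp h1) h0
      _ = (γ * μ ^ r / Real.Gamma r) * (Real.exp (-z) * (z ^ k * z ^ (γ * r - 1))) := by ring
      _ = (γ * μ ^ r / Real.Gamma r) * (Real.exp (-z) * z ^ ((k:ℝ) + γ * r - 1)) := by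
          rw [hzk]

lemma gg_scale (r : ℝ) (hγ : 0 < γ) {μ t : ℝ} (hμ : 0 < μ) (ht : 0 < t) :
    (μ ^ (1/γ))⁻¹ * ggPdf r γ μ ((μ ^ (1/γ))⁻¹ * t) = ggPdf r γ 1 t := by
  have hd : (0:ℝ) < μ ^ (1/γ) := Real.rpow_pos_of_pos hμ _
  set c : ℝ := (μ ^ (1/γ))⁻¹ with hcdef
  have hc0 : 0 < c := inv_pos.mpr hd
  have hct : 0 < c * t := mul_pos hc0 ht
  rw [ggPdf, ggPdf, if_pos hct, if_pos ht]
  have h1 : (c * t) ^ (γ * r - 1) = c ^ (γ * r - 1) * t ^ (γ * r - 1) :=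
    Real.mul_rpow hc0.le ht.le
  have hμγ : (μ ^ (1/γ)) ^ γ = μ := by
    rw [← Real.rpow_mul hμ.le, one_div_mul_cancel hγ.ne', Real.rpow_one]
  have hcγ : c ^ γ = μ⁻¹ := by
    rw [hcdef, Real.inv_rpow hd.le, hμγ]
  have h2 : μ * (c * t) ^ γ = t ^ γ := by
    rw [Real.mul_rpow hc0.le ht.le, hcγ, ← mul_assoc, mul_inv_cancel₀ hμ.ne', one_mul]
  have h3 : c * c ^ (γ * r - 1) * μ ^ r = 1 := by
    have hc1 : c = μ ^ (-(1/γ)) := by rw [hcdef, ← Real.rpow_neg hμ.le]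
    have hexp0 : (-(1/γ)) + (-(1/γ) * (γ * r - 1)) + r = 0 := by field_simp; ring
    rw [hc1, ← Real.rpow_mul hμ.le, ← Real.rpow_add hμ, ← Real.rpow_add hμ, hexp0,
      Real.rpow_zero]
  rw [h1, h2, Real.one_rpow, one_mul]
  linear_combination (γ / Real.Gamma r * t ^ (γ * r - 1) * Real.exp (-t ^ γ)) * h3

lemma step1 (hr : 0 < r) (hγ : 0 < γ) {x : ℝ} (hx : 0 ≤ x) {μ : ℝ} (hμ : 0 < μ) :
    (∑' k : ℕ, if μ ^ (1 / γ) * (k : ℝ) ≤ x then gnbP r γ μ k else 0)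
      = ∫ t in Ioi (0:ℝ),
          S (⌊x / μ ^ (1 / γ)⌋₊) ((μ ^ (1 / γ))⁻¹ * t) * ggPdf r γ 1 t := by
  have hd0 : (0:ℝ) < μ ^ (1/γ) := Real.rpow_pos_of_pos hμ _
  set d : ℝ := μ ^ (1/γ) with hddef
  set M : ℕ := ⌊x / d⌋₊ with hMdef
  have hcond : ∀ k : ℕ, (d * (k:ℝ) ≤ x ↔ k ≤ M) := by
    intro k
    rw [hMdef, Nat.le_floor_iff (div_nonneg hx hd0.le), le_div_iff₀ hd0, mul_comm]
  have h1 : (∑' k : ℕ, if d * (k:ℝ) ≤ x then gnbP r γ μ k else 0)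
      = ∑ k ∈ Finset.range (M+1), gnbP r γ μ k := by
    rw [tsum_eq_sum (s := Finset.range (M+1))
      (fun k hk => if_neg (fun h => hk (Finset.mem_range.mpr
        (Nat.lt_succ_iff.mpr ((hcond k).mp h)))))]
    exact Finset.sum_congr rfl fun k hk =>
      if_pos ((hcond k).mpr (Nat.lt_succ_iff.mp (Finset.mem_range.mp hk)))
  rw [h1]
  have h3 : ∑ k ∈ Finset.range (M+1), gnbP r γ μ k
      = ∫ z in Ioi (0:ℝ), ∑ k ∈ Finset.range (M+1),
          (1/(k.factorial:ℝ)) * (Real.exp (-z) * z ^ k * ggPdf r γ μ z) := by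
    rw [integral_finset_sum _ (fun k _ => ((term_int hr hγ hμ k).const_mul _))]
    exact Finset.sum_congr rfl fun k _ => by rw [gnbP, ← integral_const_mul]
  rw [h3]
  have h4 : ∀ z : ℝ, (∑ k ∈ Finset.range (M+1),
      (1/(k.factorial:ℝ)) * (Real.exp (-z) * z ^ k * ggPdf r γ μ z))
      = S M z * ggPdf r γ μ z := by
    intro z
    rw [S, Finset.sum_mul]
    exact Finset.sum_congr rfl fun k _ => by ring
  simp_rw [h4]
  have hc0 : 0 < d⁻¹ := inv_pos.mpr hd0
  have hsub := integral_comp_mul_left_Ioi (fun z => S M z * ggPdf r γ μ z) 0 hc0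
  rw [mul_zero] at hsub
  have h5 : ∫ t in Ioi (0:ℝ), S M (d⁻¹ * t) * ggPdf r γ 1 t
      = ∫ t in Ioi (0:ℝ), d⁻¹ * (S M (d⁻¹ * t) * ggPdf r γ μ (d⁻¹ * t)) := by
    refine setIntegral_congr_fun measurableSet_Ioi fun t ht => ?_
    have := gg_scale r hγ hμ (show (0:ℝ) < t from ht)
    rw [← hddef] at this
    rw [← this]
    ring
  rw [h5, integral_const_mul, hsub, smul_eq_mul, inv_inv, ← mul_assoc,
    inv_mul_cancel₀ hd0.ne', one_mul]

end MT

end GnbAux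

/-- If N_{r,γ,μ} has the GNB distribution with r > 0, γ > 0, μ > 0, then as
μ → 0 the rescaled variable μ^{1/γ} N_{r,γ,μ} converges in distribution to G^{1/γ} with
G ~ Gamma(r,1); i.e. the distribution functions converge pointwise (the limit distribution
function, which is that of the GG law with parameters (r, γ, 1), is continuous). -/
theorem gnb_rescaled_converges_to_gg (r γ : ℝ) (hr : 0 < r) (hγ : 0 < γ) :
    ∀ x : ℝ, Tendsto
      (fun μ : ℝ => ∑' k : ℕ, if μ ^ (1 / γ) * (k : ℝ) ≤ x then gnbP r γ μ k else 0)
      (nhdsWithin 0 (Set.Ioi 0))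
      (nhds (∫ t in Set.Iic x, ggPdf r γ 1 t)) := by
  intro x
  rcases lt_or_ge x 0 with hx | hx
  · have hzero : ∫ t in Set.Iic x, ggPdf r γ 1 t = 0 := by
      rw [setIntegral_congr_fun (g := fun _ => (0:ℝ)) measurableSet_Iic ?_, integral_zero]
      intro t ht
      have h0 : ¬ (0:ℝ) < t := by
        have : t ≤ x := ht
        simp only [not_lt]; linarith
      simp [ggPdf, h0]
    rw [hzero]
    refine Tendsto.congr' ?_ tendsto_const_nhds
    filter_upwards [self_mem_nhdsWithin] with μ hμ
    have hμ0 : (0:ℝ) < μ := hμ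
    have hall : ∀ k : ℕ, (if μ ^ (1/γ) * (k:ℝ) ≤ x then gnbP r γ μ k else 0) = 0 := by
      intro k
      rw [if_neg]
      have h0 : (0:ℝ) ≤ μ ^ (1/γ) * k :=
        mul_nonneg (Real.rpow_pos_of_pos hμ0 _).le (Nat.cast_nonneg k)
      intro h; linarith
    exact (by rw [tsum_congr hall, tsum_zero] :
      (∑' k : ℕ, if μ ^ (1/γ) * (k:ℝ) ≤ x then gnbP r γ μ k else 0) = 0).symm
  · have hgg_int : IntegrableOn (ggPdf r γ 1) (Ioi 0) := GnbAux.gg1_int hr hγ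
    have hIicEq : ∀ t ∈ Set.Iic (0:ℝ), (fun _ : ℝ => (0:ℝ)) t = ggPdf r γ 1 t := by
      intro t ht
      have h0 : ¬ (0:ℝ) < t := not_lt.mpr ht
      simp [ggPdf, h0]
    have hIic0 : ∫ t in Set.Iic (0:ℝ), ggPdf r γ 1 t = 0 := by
      rw [setIntegral_congr_fun (g := fun _ => (0:ℝ)) measurableSet_Iic
        (fun t ht => (hIicEq t ht).symm), integral_zero]
    have hIic_int : IntegrableOn (ggPdf r γ 1) (Set.Iic 0) :=
      IntegrableOn.congr_fun (integrableOn_zero) hIicEq measurableSet_Iic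
    have hIoc_int : IntegrableOn (ggPdf r γ 1) (Set.Ioc 0 x) :=
      hgg_int.mono_set Set.Ioc_subset_Ioi_self
    have hRHS : ∫ t in Set.Iic x, ggPdf r γ 1 t
        = ∫ t in Ioi (0:ℝ), Set.indicator (Set.Iic x) (ggPdf r γ 1) t := by
      rw [setIntegral_indicator measurableSet_Iic, Set.Ioi_inter_Iic,
        ← Set.Iic_union_Ioc_eq_Iic hx,
        setIntegral_union (Set.Iic_disjoint_Ioc le_rfl) measurableSet_Ioc hIic_int hIoc_int,
        hIic0, zero_add]
    rw [hRHS]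
    have hc : Tendsto (fun μ : ℝ => (μ ^ (1/γ))⁻¹) (𝓝[>] (0:ℝ)) atTop := by
      have h1 : Tendsto (fun μ : ℝ => μ ^ (1/γ)) (𝓝[>] (0:ℝ)) (𝓝[>] (0:ℝ)) := by
        rw [tendsto_nhdsWithin_iff]
        constructor
        · have h2 : Tendsto (fun μ : ℝ => Real.exp (Real.log μ * (1/γ)))
              (𝓝[>] (0:ℝ)) (𝓝 0) :=
            Real.tendsto_exp_atBot.comp
              (Real.tendsto_log_nhdsGT_zero.atBot_mul_const (by positivity))
          refine Tendsto.congr' ?_ h2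
          filter_upwards [self_mem_nhdsWithin] with μ hμ
          rw [Real.rpow_def_of_pos hμ]
        · filter_upwards [self_mem_nhdsWithin] with μ hμ
          exact Real.rpow_pos_of_pos hμ _
      exact tendsto_inv_nhdsGT_zero.comp h1
    have hmain : Tendsto (fun μ : ℝ => ∫ t in Ioi (0:ℝ),
        GnbAux.S (⌊x / μ ^ (1/γ)⌋₊) ((μ ^ (1/γ))⁻¹ * t) * ggPdf r γ 1 t)
        (𝓝[>] (0:ℝ))
        (𝓝 (∫ t in Ioi (0:ℝ), Set.indicator (Set.Iic x) (ggPdf r γ 1) t)) := by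
      apply tendsto_integral_filter_of_dominated_convergence (bound := ggPdf r γ 1)
      · refine Eventually.of_forall fun μ => ?_
        have hS : Continuous fun t : ℝ => GnbAux.S (⌊x / μ ^ (1/γ)⌋₊) ((μ ^ (1/γ))⁻¹ * t) := by
          unfold GnbAux.S
          exact continuous_finset_sum _ fun k _ => by fun_prop
        exact hS.aestronglyMeasurable.mul (GnbAux.gg_meas r γ 1).aestronglyMeasurable
      · filter_upwards [self_mem_nhdsWithin] with μ hμ
        have hμ0 : (0:ℝ) < μ := hμ
        filter_upwards [ae_restrict_mem measurableSet_Ioi] with t ht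
        have ht0 : (0:ℝ) < t := ht
        have hd0 : (0:ℝ) < μ ^ (1/γ) := Real.rpow_pos_of_pos hμ0 _
        have hyt : (0:ℝ) ≤ (μ ^ (1/γ))⁻¹ * t := by positivity
        have h0 := GnbAux.S_nonneg (M := ⌊x / μ ^ (1/γ)⌋₊) hyt
        have h1 := GnbAux.S_le_one (M := ⌊x / μ ^ (1/γ)⌋₊) hyt
        have hg := GnbAux.gg_nonneg hr hγ zero_le_one t
        rw [Real.norm_eq_abs, abs_mul, abs_of_nonneg h0, abs_of_nonneg hg]
        nlinarith
      · exact hgg_int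
      · have hne : ∀ᵐ t : ℝ ∂(volume.restrict (Ioi 0)), t ≠ x := by
          refine ae_restrict_of_ae ?_
          rw [ae_iff]
          have hset : {a : ℝ | ¬ a ≠ x} = {x} := by ext a; simp
          rw [hset]
          exact measure_singleton x
        filter_upwards [ae_restrict_mem measurableSet_Ioi, hne] with t ht htx
        have ht0 : (0:ℝ) < t := ht
        rcases lt_or_gt_of_ne htx with hlt | hgt
        · have hind : Set.indicator (Set.Iic x) (ggPdf r γ 1) t = ggPdf r γ 1 t :=
            Set.indicator_of_mem (show t ∈ Set.Iic x from hlt.le) _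
          rw [hind]
          have hM : ∀ᶠ μ : ℝ in 𝓝[>] (0:ℝ),
              x * (μ ^ (1/γ))⁻¹ ≤ (⌊x / μ ^ (1/γ)⌋₊ : ℝ) + 1 := by
            filter_upwards [self_mem_nhdsWithin] with μ hμ
            rw [← div_eq_mul_inv]
            exact (Nat.lt_floor_add_one (x / μ ^ (1/γ))).le
          have := (GnbAux.S_one hc hM ht0 hlt).mul_const (ggPdf r γ 1 t)
          simpa using this
        · have hind : Set.indicator (Set.Iic x) (ggPdf r γ 1) t = 0 :=
            Set.indicator_of_notMem (by simpa using hgt) _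
          rw [hind]
          have hM : ∀ᶠ μ : ℝ in 𝓝[>] (0:ℝ),
              ((⌊x / μ ^ (1/γ)⌋₊ : ℝ)) ≤ x * (μ ^ (1/γ))⁻¹ := by
            filter_upwards [self_mem_nhdsWithin] with μ hμ
            have hμ0 : (0:ℝ) < μ := hμ
            have hd0 : (0:ℝ) < μ ^ (1/γ) := Real.rpow_pos_of_pos hμ0 _
            rw [← div_eq_mul_inv]
            exact Nat.floor_le (div_nonneg hx hd0.le)
          have := (GnbAux.S_zero hc hM hx hgt).mul_const (ggPdf r γ 1 t)
          simpa using this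
    refine Tendsto.congr' ?_ hmain
    filter_upwards [self_mem_nhdsWithin] with μ hμ
    exact (GnbAux.step1 hr hγ hx hμ).symm


end
end

section
/- Let (P(t))_{t≥0} be a standard Poisson process and (Λ_n) a sequence of positive random variables with Λ_n independent of P for each n. Then n^{−1} P(Λ_n) converges in distribution to a nonnegative random variable Λ as n → ∞ if and only if n^{−1} Λ_n converges in distribution to Λ. -/
open MeasureTheory ProbabilityTheory Real Set Filter Topology

noncomputable section

/-- Convergence in distribution of a sequence of real random variables to a law `μ`,
expressed via convergence of expectations of bounded continuous test functions. -/
def ConvInDist {Ω : Type*} [MeasurableSpace Ω] (P : Measure Ω)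
    (Xn : ℕ → Ω → ℝ) (μ : Measure ℝ) : Prop :=
  ∀ f : BoundedContinuousFunction ℝ ℝ,
    Tendsto (fun n => ∫ ω, f (Xn n ω) ∂P) atTop (nhds (∫ x, f x ∂μ))


namespace MPaux

open scoped ENNReal NNReal

/-- Poisson pmf as a real function. -/
def p (x : ℝ) (k : ℕ) : ℝ := Real.exp (-x) * x ^ k / k.factorial

lemma p_nonneg {x : ℝ} (hx : 0 ≤ x) (k : ℕ) : 0 ≤ p x k := by
  unfold p; positivity

lemma hasSum_exp_div (x : ℝ) : HasSum (fun k : ℕ => x ^ k / k.factorial) (Real.exp x) := by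
  rw [Real.exp_eq_exp_ℝ]
  exact NormedSpace.expSeries_div_hasSum_exp x

lemma hasSum_p (x : ℝ) : HasSum (p x) 1 := by
  have h := (hasSum_exp_div x).mul_left (Real.exp (-x))
  have he : Real.exp (-x) * Real.exp x = 1 := by rw [← Real.exp_add]; simp
  rw [he] at h
  have hp : p x = fun i => Real.exp (-x) * (x ^ i / i.factorial) := by
    funext k
    rw [p, mul_div_assoc]
  rw [hp]; exact h

lemma hasSum_mean (x : ℝ) : HasSum (fun k : ℕ => (k : ℝ) * p x k) x := by
  have h := (hasSum_p x).mul_left x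
  have hshift : (fun k : ℕ => ((k + 1 : ℕ) : ℝ) * p x (k + 1)) = fun k => x * p x k := by
    funext k
    have hf : ((k.factorial : ℝ)) ≠ 0 := Nat.cast_ne_zero.mpr k.factorial_ne_zero
    have hk : ((k : ℝ) + 1) ≠ 0 := by positivity
    rw [p, p, Nat.factorial_succ]
    push_cast
    field_simp
    ring
  have h2 : HasSum (fun k : ℕ => ((k + 1 : ℕ) : ℝ) * p x (k + 1)) (x * 1) := by
    rw [hshift, mul_one]; simpa using h
  have h3 := (hasSum_nat_add_iff (f := fun k : ℕ => (k : ℝ) * p x k) 1).mp h2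
  simpa using h3

lemma hasSum_sq (x : ℝ) : HasSum (fun k : ℕ => (k : ℝ) * ((k : ℝ) - 1) * p x k) (x ^ 2) := by
  have h := (hasSum_p x).mul_left (x ^ 2)
  have hshift : (fun k : ℕ => ((k + 2 : ℕ) : ℝ) * (((k + 2 : ℕ) : ℝ) - 1) * p x (k + 2)) =
      fun k => x ^ 2 * p x k := by
    funext k
    have hf : ((k.factorial : ℝ)) ≠ 0 := Nat.cast_ne_zero.mpr k.factorial_ne_zero
    have hk1 : ((k : ℝ) + 1) ≠ 0 := by positivity
    have hk2 : ((k : ℝ) + 2) ≠ 0 := by positivity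
    rw [p, p, Nat.factorial_succ, Nat.factorial_succ]
    push_cast
    field_simp
    ring
  have h2 : HasSum (fun k : ℕ => ((k + 2 : ℕ) : ℝ) * (((k + 2 : ℕ) : ℝ) - 1) * p x (k + 2))
      (x ^ 2 * 1) := by
    rw [hshift, mul_one]; simpa using h
  have h3 := (hasSum_nat_add_iff (f := fun k : ℕ => (k : ℝ) * ((k : ℝ) - 1) * p x k) 2).mp h2
  simpa [Finset.sum_range_succ] using h3

lemma hasSum_var (x : ℝ) : HasSum (fun k : ℕ => ((k : ℝ) - x) ^ 2 * p x k) x := by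
  have h := ((hasSum_sq x).add ((hasSum_mean x).mul_left (1 - 2 * x))).add
    ((hasSum_p x).mul_left (x ^ 2))
  have hval : x ^ 2 + (1 - 2 * x) * x + x ^ 2 * 1 = x := by ring
  rw [hval] at h
  convert h using 1
  funext k
  ring


lemma summable_p (x : ℝ) : Summable (p x) := (hasSum_p x).summable
lemma tsum_p (x : ℝ) : ∑' k, p x k = 1 := (hasSum_p x).tsum_eq

lemma cheb {x t : ℝ} (hx : 0 ≤ x) (ht : 0 < t) (T : Set ℕ)
    (hT : ∀ k ∈ T, t ≤ |(k : ℝ) - x|) :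
    ∑' k, T.indicator (p x) k ≤ x / t ^ 2 := by
  have hsum2 : Summable (fun k : ℕ => t⁻¹ ^ 2 * (((k : ℝ) - x) ^ 2 * p x k)) :=
    (hasSum_var x).summable.mul_left _
  have hple : ∀ k, T.indicator (p x) k ≤ t⁻¹ ^ 2 * (((k : ℝ) - x) ^ 2 * p x k) := by
    intro k
    by_cases hk : k ∈ T
    · rw [Set.indicator_of_mem hk]
      have h1 : t ^ 2 ≤ ((k : ℝ) - x) ^ 2 := by
        have h2 := hT k hk
        have h3 : |(k : ℝ) - x| ^ 2 = ((k : ℝ) - x) ^ 2 := sq_abs _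
        nlinarith [abs_nonneg ((k : ℝ) - x)]
      have hp0 : 0 ≤ p x k := p_nonneg hx k
      have ht2 : (0:ℝ) < t ^ 2 := by positivity
      have h4 : 1 ≤ t⁻¹ ^ 2 * ((k : ℝ) - x) ^ 2 := by
        rw [inv_pow, inv_mul_eq_div, le_div_iff₀ ht2]
        linarith
      calc p x k = 1 * p x k := (one_mul _).symm
        _ ≤ (t⁻¹ ^ 2 * ((k : ℝ) - x) ^ 2) * p x k := mul_le_mul_of_nonneg_right h4 hp0
        _ = t⁻¹ ^ 2 * (((k : ℝ) - x) ^ 2 * p x k) := by ring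
    · rw [Set.indicator_of_notMem hk]
      have hp0 : 0 ≤ p x k := p_nonneg hx k
      positivity
  have key := Summable.tsum_le_tsum hple ((summable_p x).indicator T) hsum2
  have h5 : ∑' (k : ℕ), t⁻¹ ^ 2 * (((k : ℝ) - x) ^ 2 * p x k) = t⁻¹ ^ 2 * x := by
    rw [tsum_mul_left, (hasSum_var x).tsum_eq]
  rw [h5] at key
  calc ∑' k, T.indicator (p x) k ≤ t⁻¹ ^ 2 * x := key
    _ = x / t ^ 2 := by rw [inv_pow, inv_mul_eq_div]

lemma compl_cheb {x t : ℝ} (hx : 0 ≤ x) (ht : 0 < t) (T : Set ℕ)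
    (hT : ∀ k : ℕ, |(k : ℝ) - x| < t → k ∈ T) :
    1 ≤ ∑' k, T.indicator (p x) k + x / t ^ 2 := by
  have hcompl : ∀ k ∈ Tᶜ, t ≤ |(k : ℝ) - x| := by
    intro k hk
    by_contra h
    exact hk (hT k (not_le.mp h))
  have h1 := cheb hx ht Tᶜ hcompl
  have hsplit : ∑' k, p x k = ∑' k, T.indicator (p x) k + ∑' k, Tᶜ.indicator (p x) k := by
    rw [← Summable.tsum_add ((summable_p x).indicator T) ((summable_p x).indicator Tᶜ)]
    apply tsum_congr
    intro k
    by_cases hk : k ∈ T <;> simp [Set.indicator_apply, hk]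
  have h2 := tsum_p x
  rw [hsplit] at h2
  linarith

/-- ENNReal version of the pmf. -/
def q (x : ℝ) (k : ℕ) : ℝ≥0∞ := ENNReal.ofReal (p x k)

lemma tsum_indicator_q {x : ℝ} (hx : 0 ≤ x) (T : Set ℕ) :
    ∑' k, T.indicator (q x) k = ENNReal.ofReal (∑' k, T.indicator (p x) k) := by
  rw [ENNReal.ofReal_tsum_of_nonneg (fun k => Set.indicator_nonneg (fun j _ => p_nonneg hx j) k)
    ((summable_p x).indicator T)]
  apply tsum_congr
  intro k
  by_cases hk : k ∈ T <;> simp [q, Set.indicator_apply, hk]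

lemma tsum_q {x : ℝ} (hx : 0 ≤ x) : ∑' k, q x k = 1 := by
  have h := tsum_indicator_q hx Set.univ
  simpa [Set.indicator_univ, tsum_p x] using h

lemma tsum_indicator_q_le_one {x : ℝ} (hx : 0 ≤ x) (T : Set ℕ) :
    ∑' k, T.indicator (q x) k ≤ 1 := by
  rw [← tsum_q hx]
  exact Summable.tsum_le_tsum (fun k => Set.indicator_le_self T (q x) k) ENNReal.summable ENNReal.summable

lemma cheb_q {x t : ℝ} (hx : 0 ≤ x) (ht : 0 < t) (T : Set ℕ)
    (hT : ∀ k ∈ T, t ≤ |(k : ℝ) - x|) :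
    ∑' k, T.indicator (q x) k ≤ ENNReal.ofReal (x / t ^ 2) := by
  rw [tsum_indicator_q hx]
  exact ENNReal.ofReal_le_ofReal (cheb hx ht T hT)

lemma compl_cheb_q {x t : ℝ} (hx : 0 ≤ x) (ht : 0 < t) (T : Set ℕ)
    (hT : ∀ k : ℕ, |(k : ℝ) - x| < t → k ∈ T) :
    1 ≤ ∑' k, T.indicator (q x) k + ENNReal.ofReal (x / t ^ 2) := by
  rw [tsum_indicator_q hx]
  calc (1 : ℝ≥0∞) = ENNReal.ofReal 1 := ENNReal.ofReal_one.symm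
    _ ≤ ENNReal.ofReal (∑' k, T.indicator (p x) k + x / t ^ 2) :=
        ENNReal.ofReal_le_ofReal (compl_cheb hx ht T hT)
    _ ≤ _ := ENNReal.ofReal_add_le


section Meas
variable {Ω : Type*} [MeasurableSpace Ω] (P : Measure Ω) [IsProbabilityMeasure P]
variable (Λ : Ω → ℝ) (hΛm : Measurable Λ) (hΛpos : ∀ ω, 0 < Λ ω)
variable (N : Ω → ℕ) (hNm : Measurable N)
variable (n : ℕ) (hn : 1 ≤ n)
variable (hNlaw : ∀ k, P {ω | N ω = k} =
  ∫⁻ ω, ENNReal.ofReal (Real.exp (-(Λ ω)) * Λ ω ^ k / k.factorial) ∂P)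

include hΛm in
lemma measurable_qΛ (k : ℕ) : Measurable (fun ω => q (Λ ω) k) := by
  unfold q p
  exact (((Real.measurable_exp.comp hΛm.neg).mul (hΛm.pow_const k)).div_const
    _).ennreal_ofReal

include hΛm hNm hNlaw in
/-- Key identity: law of `N/n` expressed as a mixture of Poisson pmfs. -/
lemma law_N (B : Set ℝ) :
    P {ω | ((N ω : ℝ) / n) ∈ B} =
      ∫⁻ ω, ∑' k, {j : ℕ | ((j : ℝ) / n) ∈ B}.indicator (q (Λ ω)) k ∂P := by
  set S : Set ℕ := {j : ℕ | ((j : ℝ) / n) ∈ B} with hS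
  have hset : {ω | ((N ω : ℝ) / n) ∈ B} = ⋃ k ∈ S, {ω | N ω = k} := by
    ext ω
    simp only [Set.mem_setOf_eq, Set.mem_iUnion]
    constructor
    · intro h; exact ⟨N ω, h, rfl⟩
    · rintro ⟨k, hk, rfl⟩; exact hk
  have hdisj : S.PairwiseDisjoint (fun k => {ω | N ω = k}) := by
    intro k hk l hl hkl
    simp only [Function.onFun, Set.disjoint_left]
    intro ω h1 h2
    exact hkl (by simp only [Set.mem_setOf_eq] at h1 h2; rw [← h1, ← h2])
  have hmbl : ∀ k ∈ S, MeasurableSet {ω | N ω = k} :=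
    fun k _ => hNm (measurableSet_singleton k)
  rw [hset, measure_biUnion S.to_countable hdisj hmbl]
  calc ∑' (k : S), P {ω | N ω = k} = ∑' (k : S), ∫⁻ ω, q (Λ ω) k ∂P := by
          apply tsum_congr; intro k; exact hNlaw k
      _ = ∫⁻ ω, ∑' (k : S), q (Λ ω) k ∂P :=
          (lintegral_tsum (fun k : S => (measurable_qΛ Λ hΛm (k : ℕ)).aemeasurable)).symm
      _ = ∫⁻ ω, ∑' k, S.indicator (q (Λ ω)) k ∂P := by
          congr 1; funext ω; exact tsum_subtype S (q (Λ ω))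


include hΛm in
lemma measurable_g (T : Set ℕ) : Measurable (fun ω => ∑' k, T.indicator (q (Λ ω)) k) := by
  apply Measurable.ennreal_tsum
  intro k
  by_cases hk : k ∈ T
  · simpa [Set.indicator_of_mem hk] using measurable_qΛ Λ hΛm k
  · simp only [Set.indicator_of_notMem hk]
    exact measurable_const

lemma lint_helper {f g : Ω → ℝ≥0∞} (hg : Measurable g) {A : Set Ω} (hA : MeasurableSet A)
    (c : ℝ≥0∞) (hle : ∀ ω, f ω ≤ g ω + A.indicator 1 ω + c) :
    ∫⁻ ω, f ω ∂P ≤ (∫⁻ ω, g ω ∂P) + P A + c := by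
  calc ∫⁻ ω, f ω ∂P ≤ ∫⁻ ω, (g ω + A.indicator 1 ω + c) ∂P := lintegral_mono hle
    _ = (∫⁻ ω, (g ω + A.indicator 1 ω) ∂P) + ∫⁻ _, c ∂P :=
        lintegral_add_right _ measurable_const
    _ = (∫⁻ ω, g ω ∂P) + (∫⁻ ω, A.indicator 1 ω ∂P) + ∫⁻ _, c ∂P := by
        rw [lintegral_add_right _ (measurable_one.indicator hA)]
    _ = (∫⁻ ω, g ω ∂P) + P A + c := by
        rw [lintegral_indicator_one hA, lintegral_const, measure_univ, mul_one]

include hΛm hΛpos hNm hn hNlaw in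
lemma bound_I (B : Set ℝ) {ε M : ℝ} (hε : 0 < ε) (hM : 0 < M) :
    P {ω | ((N ω : ℝ) / n) ∈ B} ≤
      P {ω | Λ ω / n ∈ Metric.thickening ε B} + P {ω | Λ ω / n ∈ Set.Ioi M}
        + ENNReal.ofReal (M / (n * ε ^ 2)) := by
  have hnR : (0:ℝ) < n := by exact_mod_cast hn
  rw [law_N P Λ hΛm N hNm n hNlaw B]
  set S : Set ℕ := {j : ℕ | ((j : ℝ) / n) ∈ B} with hS
  have hA1 : MeasurableSet {ω | Λ ω / n ∈ Metric.thickening ε B} :=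
    (hΛm.div_const _) Metric.isOpen_thickening.measurableSet
  have hA2 : MeasurableSet {ω | Λ ω / n ∈ Set.Ioi M} :=
    (hΛm.div_const _) measurableSet_Ioi
  have hpt : ∀ ω, ∑' k, S.indicator (q (Λ ω)) k ≤
      ({ω | Λ ω / n ∈ Metric.thickening ε B}).indicator 1 ω
        + ({ω | Λ ω / n ∈ Set.Ioi M}).indicator 1 ω + ENNReal.ofReal (M / (n * ε ^ 2)) := by
    intro ω
    set x := Λ ω with hx
    have hx0 : 0 < x := hΛpos ω
    by_cases h1 : x / n ∈ Metric.thickening ε B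
    · calc ∑' k, S.indicator (q x) k ≤ 1 := tsum_indicator_q_le_one hx0.le S
        _ ≤ _ := by
          rw [Set.indicator_of_mem (by exact h1 : ω ∈ {ω | Λ ω / n ∈ Metric.thickening ε B})]
          exact le_add_right (le_add_right le_rfl)
    · by_cases h2 : x / n ∈ Set.Ioi M
      · calc ∑' k, S.indicator (q x) k ≤ 1 := tsum_indicator_q_le_one hx0.le S
          _ ≤ _ := by
            rw [Set.indicator_of_mem (by exact h2 : ω ∈ {ω | Λ ω / n ∈ Set.Ioi M})]
            exact le_add_right (le_add_left le_rfl)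
      · have hxM : x ≤ n * M := by
          have : x / n ≤ M := not_lt.mp h2
          rw [div_le_iff₀ hnR] at this
          linarith
        have hT : ∀ k ∈ S, (n * ε) ≤ |(k : ℝ) - x| := by
          intro k hk
          by_contra hcon
          push_neg at hcon
          apply h1
          rw [Metric.mem_thickening_iff]
          refine ⟨(k : ℝ) / n, hk, ?_⟩
          rw [Real.dist_eq, div_sub_div_same, abs_div, abs_of_pos hnR, div_lt_iff₀ hnR]
          calc |x - (k:ℝ)| = |(k:ℝ) - x| := abs_sub_comm _ _
            _ < n * ε := hcon
            _ = ε * n := mul_comm _ _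
        have hch := cheb_q hx0.le (mul_pos hnR hε) S hT
        have harith : x / (n * ε) ^ 2 ≤ M / (n * ε ^ 2) := by
          have h3 : x / ((n : ℝ) * ε) ^ 2 = (x / n) / ((n : ℝ) * ε ^ 2) := by
            rw [div_div]
            ring
          have h4 : x / n ≤ M := not_lt.mp h2
          rw [h3]
          gcongr
        calc ∑' k, S.indicator (q x) k ≤ ENNReal.ofReal (x / (n * ε) ^ 2) := hch
          _ ≤ ENNReal.ofReal (M / (n * ε ^ 2)) := ENNReal.ofReal_le_ofReal harith
          _ ≤ _ := le_add_left le_rfl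
  calc ∫⁻ ω, ∑' k, S.indicator (q (Λ ω)) k ∂P
      ≤ (∫⁻ ω, ({ω | Λ ω / n ∈ Metric.thickening ε B}).indicator 1 ω ∂P)
        + P {ω | Λ ω / n ∈ Set.Ioi M} + ENNReal.ofReal (M / (n * ε ^ 2)) :=
        lint_helper P (measurable_one.indicator hA1) hA2 _ hpt
    _ = _ := by rw [lintegral_indicator_one hA1]

include hΛm hΛpos hNm hn hNlaw in
lemma bound_II (B : Set ℝ) (hB : MeasurableSet B) {ε M : ℝ} (hε : 0 < ε) (hM : 0 < M) :
    P {ω | Λ ω / n ∈ B} ≤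
      P {ω | ((N ω : ℝ) / n) ∈ Metric.thickening ε B} + P {ω | Λ ω / n ∈ Set.Ioi M}
        + ENNReal.ofReal (M / (n * ε ^ 2)) := by
  have hnR : (0:ℝ) < n := by exact_mod_cast hn
  rw [law_N P Λ hΛm N hNm n hNlaw (Metric.thickening ε B)]
  set S : Set ℕ := {j : ℕ | ((j : ℝ) / n) ∈ Metric.thickening ε B} with hS
  have hA2 : MeasurableSet {ω | Λ ω / n ∈ Set.Ioi M} :=
    (hΛm.div_const _) measurableSet_Ioi
  have hpt : ∀ ω, ({ω | Λ ω / n ∈ B}).indicator 1 ω ≤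
      (∑' k, S.indicator (q (Λ ω)) k)
        + ({ω | Λ ω / n ∈ Set.Ioi M}).indicator 1 ω + ENNReal.ofReal (M / (n * ε ^ 2)) := by
    intro ω
    set x := Λ ω with hx
    have hx0 : 0 < x := hΛpos ω
    by_cases hA : x / n ∈ B
    · rw [Set.indicator_of_mem (by exact hA : ω ∈ {ω | Λ ω / n ∈ B})]
      by_cases h2 : x / n ∈ Set.Ioi M
      · rw [Set.indicator_of_mem (by exact h2 : ω ∈ {ω | Λ ω / n ∈ Set.Ioi M})]
        calc (1 : ℝ≥0∞) = 1 := rfl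
          _ ≤ (∑' k, S.indicator (q x) k) + 1 := le_add_left le_rfl
          _ ≤ _ := le_add_right le_rfl
      · have hxM : x ≤ n * M := by
          have : x / n ≤ M := not_lt.mp h2
          rw [div_le_iff₀ hnR] at this
          linarith
        have hT : ∀ k : ℕ, |(k : ℝ) - x| < n * ε → k ∈ S := by
          intro k hk
          rw [hS, Set.mem_setOf_eq, Metric.mem_thickening_iff]
          refine ⟨x / n, hA, ?_⟩
          rw [Real.dist_eq, div_sub_div_same, abs_div, abs_of_pos hnR, div_lt_iff₀ hnR]
          calc |(k:ℝ) - x| < n * ε := hk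
            _ = ε * n := mul_comm _ _
        have hch := compl_cheb_q hx0.le (mul_pos hnR hε) S hT
        have harith : x / ((n : ℝ) * ε) ^ 2 ≤ M / ((n : ℝ) * ε ^ 2) := by
          have h3 : x / ((n : ℝ) * ε) ^ 2 = (x / n) / ((n : ℝ) * ε ^ 2) := by
            rw [div_div]
            ring
          have h4 : x / n ≤ M := not_lt.mp h2
          rw [h3]
          gcongr
        calc (1 : ℝ≥0∞) ≤ (∑' k, S.indicator (q x) k) + ENNReal.ofReal (x / (n * ε) ^ 2) := hch
          _ ≤ (∑' k, S.indicator (q x) k) + ENNReal.ofReal (M / (n * ε ^ 2)) := by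
              exact add_le_add_right (ENNReal.ofReal_le_ofReal harith) _
          _ ≤ _ := by
            rw [add_right_comm]
            exact le_add_right le_rfl
    · rw [Set.indicator_of_notMem (by exact hA : ω ∉ {ω | Λ ω / n ∈ B})]
      exact zero_le
  have hmain := lint_helper P (measurable_g Λ hΛm S) hA2 (ENNReal.ofReal (M / (n * ε ^ 2))) hpt
  have hl : ∫⁻ ω, ({ω | Λ ω / n ∈ B}).indicator 1 ω ∂P = P {ω | Λ ω / n ∈ B} :=
    lintegral_indicator_one ((hΛm.div_const _) hB)
  rw [hl] at hmain
  exact hmain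

include hΛm hΛpos hNm hn hNlaw in
lemma bound_III {M : ℝ} (hM : 0 < M) :
    P {ω | Λ ω / n ∈ Set.Ioi M} ≤
      P {ω | ((N ω : ℝ) / n) ∈ Set.Ioi (M / 2)} + ENNReal.ofReal (4 / (n * M)) := by
  have hnR : (0:ℝ) < n := by exact_mod_cast hn
  rw [law_N P Λ hΛm N hNm n hNlaw (Set.Ioi (M / 2))]
  set S : Set ℕ := {j : ℕ | ((j : ℝ) / n) ∈ Set.Ioi (M / 2)} with hS
  have hpt : ∀ ω, ({ω | Λ ω / n ∈ Set.Ioi M}).indicator 1 ω ≤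
      (∑' k, S.indicator (q (Λ ω)) k)
        + (∅ : Set Ω).indicator 1 ω + ENNReal.ofReal (4 / (n * M)) := by
    intro ω
    set x := Λ ω with hx
    have hx0 : 0 < x := hΛpos ω
    by_cases hA : x / n ∈ Set.Ioi M
    · rw [Set.indicator_of_mem (by exact hA : ω ∈ {ω | Λ ω / n ∈ Set.Ioi M})]
      have hxM : (n : ℝ) * M < x := by
        have : M < x / n := hA
        rw [lt_div_iff₀ hnR] at this
        linarith
      have hT : ∀ k : ℕ, |(k : ℝ) - x| < x / 2 → k ∈ S := by
        intro k hk
        rw [hS, Set.mem_setOf_eq, Set.mem_Ioi]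
        have h1 : x / 2 < (k : ℝ) := by
          have := abs_lt.mp hk
          linarith [this.1]
        rw [lt_div_iff₀ hnR]
        have h2 : (n : ℝ) * M / 2 < x / 2 := by linarith
        calc M / 2 * n = (n : ℝ) * M / 2 := by ring
          _ < x / 2 := h2
          _ < k := h1
      have hch := compl_cheb_q hx0.le (half_pos hx0) S hT
      have harith : x / (x / 2) ^ 2 ≤ 4 / ((n : ℝ) * M) := by
        have h3 : x / (x / 2) ^ 2 = 4 / x := by
          field_simp
          ring
        rw [h3]
        apply div_le_div_of_nonneg_left (by norm_num) (by positivity) hxM.le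
      calc (1 : ℝ≥0∞) ≤ (∑' k, S.indicator (q x) k) + ENNReal.ofReal (x / (x / 2) ^ 2) := hch
        _ ≤ (∑' k, S.indicator (q x) k) + ENNReal.ofReal (4 / (n * M)) :=
            add_le_add_right (ENNReal.ofReal_le_ofReal harith) _
        _ = (∑' k, S.indicator (q x) k) + (∅ : Set Ω).indicator 1 ω
              + ENNReal.ofReal (4 / (n * M)) := by
            simp
    · rw [Set.indicator_of_notMem (by exact hA : ω ∉ {ω | Λ ω / n ∈ Set.Ioi M})]
      exact zero_le
  have hmain := lint_helper P (measurable_g Λ hΛm S) MeasurableSet.empty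
    (ENNReal.ofReal (4 / (n * M))) hpt
  have hl : ∫⁻ ω, ({ω | Λ ω / n ∈ Set.Ioi M}).indicator 1 ω ∂P
      = P {ω | Λ ω / n ∈ Set.Ioi M} :=
    lintegral_indicator_one ((hΛm.div_const _) measurableSet_Ioi)
  rw [hl] at hmain
  simpa using hmain


end Meas
lemma tendsto_of_limsup_closed {μ : ProbabilityMeasure ℝ} {μs : ℕ → ProbabilityMeasure ℝ}
    (h : ∀ F : Set ℝ, IsClosed F →
      atTop.limsup (fun n => (μs n : Measure ℝ) F) ≤ (μ : Measure ℝ) F) :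
    Tendsto μs atTop (𝓝 μ) := by
  apply tendsto_of_forall_isOpen_le_liminf
  intro G hG
  have h2 := (limsup_measure_closed_le_iff_liminf_measure_open_ge
    (μ := (μ : Measure ℝ)) (μs := fun n => (μs n : Measure ℝ))).mp (fun F hF => h F hF) G hG
  have aux : (ENNReal.ofNNReal (atTop.liminf fun n => μs n G)) =
      atTop.liminf (fun n => ((μs n G : ℝ≥0) : ℝ≥0∞)) := by
    refine Monotone.map_liminf_of_continuousAt (F := atTop) ENNReal.coe_mono (fun n => μs n G)
      ENNReal.continuous_coe.continuousAt ?_ ?_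
    · exact IsBoundedUnder.isCoboundedUnder_ge ⟨1, by simp⟩
    · exact ⟨0, by simp⟩
  rw [← ENNReal.coe_le_coe, aux]
  simpa [ProbabilityMeasure.ennreal_coeFn_eq_coeFn_toMeasure] using h2

lemma exists_small_cthickening (μ : ProbabilityMeasure ℝ) {F : Set ℝ} (hF : IsClosed F)
    {r : ℝ} (hr : 0 < r) :
    ∃ ε > 0, (μ : Measure ℝ) (Metric.cthickening ε F) ≤ (μ : Measure ℝ) F + ENNReal.ofReal r := by
  have hcont := tendsto_measure_cthickening_of_isClosed (μ := (μ : Measure ℝ))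
    ⟨1, one_pos, measure_ne_top _ _⟩ hF
  have hlt : (μ : Measure ℝ) F < (μ : Measure ℝ) F + ENNReal.ofReal r :=
    ENNReal.lt_add_right (measure_ne_top _ _) (by simp [ENNReal.ofReal_eq_zero]; linarith)
  have hev := hcont.eventually_le_const hlt
  rw [Metric.eventually_nhds_iff] at hev
  obtain ⟨ε, hε0, hεh⟩ := hev
  refine ⟨ε / 2, by linarith, hεh ?_⟩
  rw [Real.dist_eq, sub_zero, abs_of_pos (by linarith)]
  linarith

lemma exists_small_tail (μ : ProbabilityMeasure ℝ) {r : ℝ} (hr : 0 < r) :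
    ∃ M > 0, (μ : Measure ℝ) (Set.Ici M) ≤ ENNReal.ofReal r := by
  have hi : Tendsto (fun i : ℕ => (μ : Measure ℝ) (Set.Ici (i : ℝ))) atTop
      (𝓝 ((μ : Measure ℝ) (⋂ i : ℕ, Set.Ici (i : ℝ)))) := by
    apply tendsto_measure_iInter_atTop (fun i => measurableSet_Ici.nullMeasurableSet)
      (fun i j hij => Set.Ici_subset_Ici.mpr (by exact_mod_cast hij)) ⟨0, measure_ne_top _ _⟩
  have hempty : (⋂ i : ℕ, Set.Ici (i : ℝ)) = ∅ := by
    ext x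
    simp only [Set.mem_iInter, Set.mem_Ici, Set.mem_empty_iff_false, iff_false, not_forall, not_le]
    exact exists_nat_gt x
  rw [hempty, measure_empty] at hi
  have hev := hi.eventually_le_const (show (0:ℝ≥0∞) < ENNReal.ofReal r by
    simp [ENNReal.ofReal_pos]; linarith)
  obtain ⟨i, hi2⟩ := hev.exists
  refine ⟨(i : ℝ) + 1, by positivity, le_trans (measure_mono ?_) hi2⟩
  exact Set.Ici_subset_Ici.mpr (by linarith)

lemma transfer {μ : ProbabilityMeasure ℝ} {σs τs : ℕ → ProbabilityMeasure ℝ}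
    (hσ : Tendsto σs atTop (𝓝 μ))
    (h : ∀ ε : ℝ, 0 < ε → ∀ M : ℝ, 0 < M → ∀ F : Set ℝ, IsClosed F → ∀ δ : ℝ, 0 < δ →
      ∀ᶠ n in atTop, (τs n : Measure ℝ) F ≤
        (σs n : Measure ℝ) (Metric.thickening ε F) + (σs n : Measure ℝ) (Set.Ici M)
          + ENNReal.ofReal δ) :
    Tendsto τs atTop (𝓝 μ) := by
  apply tendsto_of_limsup_closed
  intro F hF
  apply ENNReal.le_of_forall_pos_le_add
  intro η hη _
  set r : ℝ := (η : ℝ) / 8 with hr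
  have hη0 : (0:ℝ) < (η : ℝ) := hη
  have hr0 : 0 < r := by positivity
  have hor0 : ENNReal.ofReal r ≠ 0 := by simp [ENNReal.ofReal_eq_zero]; linarith
  obtain ⟨ε, hε0, hεle⟩ := exists_small_cthickening μ hF hr0
  obtain ⟨M, hM0, hMle⟩ := exists_small_tail μ hr0
  -- portmanteau bounds for σ
  have hthick : atTop.limsup (fun n => (σs n : Measure ℝ) (Metric.cthickening ε F)) ≤
      (μ : Measure ℝ) F + ENNReal.ofReal r :=
    le_trans (ProbabilityMeasure.limsup_measure_closed_le_of_tendsto hσ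
      (Metric.isClosed_cthickening)) hεle
  have hne1 : (μ : Measure ℝ) F + ENNReal.ofReal r ≠ ⊤ := by
    exact ENNReal.add_ne_top.mpr ⟨measure_ne_top _ _, ENNReal.ofReal_ne_top⟩
  have hev1 : ∀ᶠ n in atTop, (σs n : Measure ℝ) (Metric.thickening ε F) ≤
      (μ : Measure ℝ) F + ENNReal.ofReal r + ENNReal.ofReal r := by
    have hlt := lt_of_le_of_lt hthick (ENNReal.lt_add_right hne1 hor0)
    filter_upwards [Filter.eventually_lt_of_limsup_lt hlt] with n hn
    exact le_trans (measure_mono (Metric.thickening_subset_cthickening _ _)) hn.le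
  have hIci : atTop.limsup (fun n => (σs n : Measure ℝ) (Set.Ici M)) ≤ ENNReal.ofReal r :=
    le_trans (ProbabilityMeasure.limsup_measure_closed_le_of_tendsto hσ isClosed_Ici) hMle
  have hev2 : ∀ᶠ n in atTop, (σs n : Measure ℝ) (Set.Ici M) ≤
      ENNReal.ofReal r + ENNReal.ofReal r := by
    have hlt := lt_of_le_of_lt hIci (ENNReal.lt_add_right ENNReal.ofReal_ne_top hor0)
    filter_upwards [Filter.eventually_lt_of_limsup_lt hlt] with n hn
    exact hn.le
  have hev3 := h ε hε0 M hM0 F hF r hr0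
  have hsum : ENNReal.ofReal r + ENNReal.ofReal r + ENNReal.ofReal r + ENNReal.ofReal r
      + ENNReal.ofReal r ≤ (η : ℝ≥0∞) := by
    rw [← ENNReal.ofReal_add (by positivity) (by positivity),
      ← ENNReal.ofReal_add (by positivity) (by positivity),
      ← ENNReal.ofReal_add (by positivity) (by positivity),
      ← ENNReal.ofReal_add (by positivity) (by positivity)]
    rw [← ENNReal.ofReal_coe_nnreal]
    apply ENNReal.ofReal_le_ofReal
    rw [hr]
    linarith
  have hfinal : ∀ᶠ n in atTop, (τs n : Measure ℝ) F ≤ (μ : Measure ℝ) F + η := by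
    filter_upwards [hev1, hev2, hev3] with n h1 h2 h3
    calc (τs n : Measure ℝ) F ≤ (σs n : Measure ℝ) (Metric.thickening ε F)
          + (σs n : Measure ℝ) (Set.Ici M) + ENNReal.ofReal r := h3
      _ ≤ ((μ : Measure ℝ) F + ENNReal.ofReal r + ENNReal.ofReal r)
          + (ENNReal.ofReal r + ENNReal.ofReal r) + ENNReal.ofReal r :=
          add_le_add (add_le_add h1 h2) le_rfl
      _ = (μ : Measure ℝ) F + (ENNReal.ofReal r + ENNReal.ofReal r + ENNReal.ofReal r
          + ENNReal.ofReal r + ENNReal.ofReal r) := by ring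
      _ ≤ (μ : Measure ℝ) F + η := add_le_add le_rfl hsum
  calc atTop.limsup (fun n => (τs n : Measure ℝ) F) ≤
      atTop.limsup (fun _ => (μ : Measure ℝ) F + (η : ℝ≥0∞)) := limsup_le_limsup hfinal
    _ = (μ : Measure ℝ) F + η := limsup_const _


lemma conv_iff_tendsto {Ω : Type*} [MeasurableSpace Ω] (P : Measure Ω) [IsProbabilityMeasure P]
    {X : ℕ → Ω → ℝ} (hX : ∀ n, Measurable (X n)) (μΛ : Measure ℝ)
    (pm : ℕ → ProbabilityMeasure ℝ) (hpm : ∀ n, (pm n : Measure ℝ) = P.map (X n))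
    (μpm : ProbabilityMeasure ℝ) (hμpm : (μpm : Measure ℝ) = μΛ) :
    ConvInDist P X μΛ ↔ Tendsto pm atTop (𝓝 μpm) := by
  rw [ProbabilityMeasure.tendsto_iff_forall_integral_tendsto]
  unfold ConvInDist
  apply forall_congr'
  intro f
  have key : (fun n => ∫ ω, f (X n ω) ∂P) = (fun n => ∫ x, f x ∂(pm n : Measure ℝ)) := by
    funext n
    rw [hpm n, integral_map (hX n).aemeasurable f.continuous.measurable.aestronglyMeasurable]
  have key2 : ∫ x, f x ∂μΛ = ∫ x, f x ∂(μpm : Measure ℝ) := by rw [hμpm]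
  rw [key, key2]


end MPaux

/-- Let (Λ_n) be positive random variables, and for each n let N_n = P(Λ_n)
be the corresponding mixed Poisson random variable (Poisson process with unit intensity
evaluated at the independent random time Λ_n, so that
P(N_n = k) = E[e^{−Λ_n} Λ_n^k / k!]).  Then n⁻¹ N_n converges in distribution to a
nonnegative random variable with law μΛ iff n⁻¹ Λ_n converges in distribution to it. -/
theorem mixed_poisson_transfer
    {Ω : Type*} [MeasurableSpace Ω] (P : Measure Ω) [IsProbabilityMeasure P]
    (Λn : ℕ → Ω → ℝ) (hΛm : ∀ n, Measurable (Λn n)) (hΛpos : ∀ n ω, 0 < Λn n ω)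
    (N : ℕ → Ω → ℕ) (hNm : ∀ n, Measurable (N n))
    (hNlaw : ∀ n k, P {ω | N n ω = k} =
      ∫⁻ ω, ENNReal.ofReal (Real.exp (-(Λn n ω)) * Λn n ω ^ k / k.factorial) ∂P)
    (μΛ : Measure ℝ) [IsProbabilityMeasure μΛ] (hμΛ : μΛ (Set.Iio 0) = 0) :
    ConvInDist P (fun n ω => (N n ω : ℝ) / n) μΛ ↔
      ConvInDist P (fun n ω => Λn n ω / n) μΛ := by
  classical
  have hXm : ∀ m : ℕ, Measurable (fun ω => Λn m ω / m) := fun m => (hΛm m).div_const _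
  have hYcast : ∀ m : ℕ, Measurable (fun ω => ((N m ω : ℝ))) := fun m =>
    measurable_from_top.comp (hNm m)
  have hYm : ∀ m : ℕ, Measurable (fun ω => (N m ω : ℝ) / m) := fun m => (hYcast m).div_const _
  let μpm : ℕ → ProbabilityMeasure ℝ := fun m =>
    ⟨P.map (fun ω => Λn m ω / m), Measure.isProbabilityMeasure_map (hXm m).aemeasurable⟩
  let νpm : ℕ → ProbabilityMeasure ℝ := fun m =>
    ⟨P.map (fun ω => (N m ω : ℝ) / m), Measure.isProbabilityMeasure_map (hYm m).aemeasurable⟩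
  let Λpm : ProbabilityMeasure ℝ := ⟨μΛ, inferInstance⟩
  have hμap : ∀ (m : ℕ) (S : Set ℝ), MeasurableSet S →
      (μpm m : Measure ℝ) S = P {ω | Λn m ω / m ∈ S} := fun m S hS =>
    Measure.map_apply (hXm m) hS
  have hνap : ∀ (m : ℕ) (S : Set ℝ), MeasurableSet S →
      (νpm m : Measure ℝ) S = P {ω | (N m ω : ℝ) / m ∈ S} := fun m S hS =>
    Measure.map_apply (hYm m) hS
  rw [MPaux.conv_iff_tendsto P hYm μΛ νpm (fun m => rfl) Λpm rfl,
      MPaux.conv_iff_tendsto P hXm μΛ μpm (fun m => rfl) Λpm rfl]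
  constructor
  · intro hνt
    apply MPaux.transfer hνt
    intro ε hε M hM F hF δ hδ
    have ht1 := tendsto_const_div_atTop_nhds_zero_nat (2 * M / ε ^ 2)
    have ht2 := tendsto_const_div_atTop_nhds_zero_nat (4 / (2 * M))
    have hev1 := ht1.eventually_le_const (half_pos hδ)
    have hev2 := ht2.eventually_le_const (half_pos hδ)
    filter_upwards [hev1, hev2, eventually_ge_atTop 1] with m h1 h2 hm1
    have h2M : (0:ℝ) < 2 * M := by linarith
    have hb2 := MPaux.bound_II P (Λn m) (hΛm m) (hΛpos m) (N m) (hNm m) m hm1 (hNlaw m)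
      F hF.measurableSet hε h2M
    have hb3 := MPaux.bound_III P (Λn m) (hΛm m) (hΛpos m) (N m) (hNm m) m hm1 (hNlaw m) h2M
    rw [hμap m F hF.measurableSet, hνap m _ Metric.isOpen_thickening.measurableSet,
      hνap m _ measurableSet_Ici]
    have hsub : P {ω | (N m ω : ℝ) / m ∈ Set.Ioi (2 * M / 2)} ≤
        P {ω | (N m ω : ℝ) / m ∈ Set.Ici M} := by
      apply measure_mono
      intro ω hω
      simp only [Set.mem_setOf_eq, Set.mem_Ioi] at hω
      simp only [Set.mem_setOf_eq, Set.mem_Ici]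
      linarith
    have hc : ENNReal.ofReal (4 / (m * (2 * M))) + ENNReal.ofReal (2 * M / (m * ε ^ 2)) ≤
        ENNReal.ofReal δ := by
      rw [← ENNReal.ofReal_add (by positivity) (by positivity)]
      apply ENNReal.ofReal_le_ofReal
      have e1 : 4 / ((m:ℝ) * (2 * M)) = (4 / (2 * M)) / m := by rw [div_div]; ring_nf
      have e2 : 2 * M / ((m:ℝ) * ε ^ 2) = (2 * M / ε ^ 2) / m := by rw [div_div]; ring_nf
      rw [e1, e2]
      linarith
    calc P {ω | Λn m ω / m ∈ F}
        ≤ P {ω | (N m ω : ℝ) / m ∈ Metric.thickening ε F} + P {ω | Λn m ω / m ∈ Set.Ioi (2*M)}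
          + ENNReal.ofReal (2 * M / (m * ε ^ 2)) := hb2
      _ ≤ P {ω | (N m ω : ℝ) / m ∈ Metric.thickening ε F}
          + (P {ω | (N m ω : ℝ) / m ∈ Set.Ici M} + ENNReal.ofReal (4 / (m * (2 * M))))
          + ENNReal.ofReal (2 * M / (m * ε ^ 2)) :=
          add_le_add (add_le_add le_rfl (hb3.trans (add_le_add hsub le_rfl))) le_rfl
      _ = P {ω | (N m ω : ℝ) / m ∈ Metric.thickening ε F} + P {ω | (N m ω : ℝ) / m ∈ Set.Ici M}
          + (ENNReal.ofReal (4 / (m * (2 * M))) + ENNReal.ofReal (2 * M / (m * ε ^ 2))) := by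
          ring
      _ ≤ _ := add_le_add le_rfl hc
  · intro hμt
    apply MPaux.transfer hμt
    intro ε hε M hM F hF δ hδ
    have ht1 := tendsto_const_div_atTop_nhds_zero_nat (M / ε ^ 2)
    have hev1 := ht1.eventually_le_const hδ
    filter_upwards [hev1, eventually_ge_atTop 1] with m h1 hm1
    have hb1 := MPaux.bound_I P (Λn m) (hΛm m) (hΛpos m) (N m) (hNm m) m hm1 (hNlaw m) F hε hM
    rw [hνap m F hF.measurableSet, hμap m _ Metric.isOpen_thickening.measurableSet,
      hμap m _ measurableSet_Ici]
    have hsub : P {ω | Λn m ω / m ∈ Set.Ioi M} ≤ P {ω | Λn m ω / m ∈ Set.Ici M} := by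
      apply measure_mono
      intro ω hω
      simp only [Set.mem_setOf_eq, Set.mem_Ioi] at hω
      simp only [Set.mem_setOf_eq, Set.mem_Ici]
      linarith
    have hc : ENNReal.ofReal (M / (m * ε ^ 2)) ≤ ENNReal.ofReal δ := by
      apply ENNReal.ofReal_le_ofReal
      have e : M / ((m:ℝ) * ε ^ 2) = (M / ε ^ 2) / m := by rw [div_div]; ring_nf
      rw [e]
      exact h1
    calc P {ω | (N m ω : ℝ) / m ∈ F}
        ≤ P {ω | Λn m ω / m ∈ Metric.thickening ε F} + P {ω | Λn m ω / m ∈ Set.Ioi M}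
          + ENNReal.ofReal (M / (m * ε ^ 2)) := hb1
      _ ≤ _ := add_le_add (add_le_add le_rfl hsub) hc

end
end

section
/- Transfer theorem for random sums/maxima: Let (W_n) be random variables, (N_n) natural-valued random variables with N_n independent of (W_n) for each n. Suppose b_n^{−1} W_n ⇒ W for positive constants b_n → ∞, and d_n^{−1} b_{N_n} ⇒ N for positive constants d_n → ∞ and a random variable N. Then d_n^{−1} W_{N_n} ⇒ W · N, where W and N on the right-hand side are independent. -/
open MeasureTheory ProbabilityTheory Real Set Filter Topology

noncomputable section

/-- continuous cutoff: 0 for |x| ≤ M, 1 for |x| ≥ M+1 -/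
def cutoffAbs (M : ℝ) : BoundedContinuousFunction ℝ ℝ :=
  ⟨⟨fun x => min 1 (max 0 (|x| - M)),
    (continuous_const.min ((continuous_const.max (continuous_abs.sub continuous_const))))⟩,
    1, by
      intro x y
      have h1 : ∀ z : ℝ, 0 ≤ min 1 (max 0 (|z| - M)) := fun z =>
        le_min zero_le_one (le_max_left _ _)
      have h2 : ∀ z : ℝ, min 1 (max 0 (|z| - M)) ≤ 1 := fun z => min_le_left _ _
      rw [Real.dist_eq, abs_sub_le_iff]
      constructor <;> nlinarith [h1 x, h2 x, h1 y, h2 y]⟩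

lemma cutoffAbs_nonneg (M : ℝ) (x : ℝ) : 0 ≤ cutoffAbs M x :=
  le_min zero_le_one (le_max_left _ _)

lemma cutoffAbs_le_indicator (M : ℝ) (x : ℝ) :
    cutoffAbs M x ≤ Set.indicator {y : ℝ | M ≤ |y|} (fun _ => (1:ℝ)) x := by
  by_cases h : M ≤ |x|
  · simp only [Set.indicator_apply, Set.mem_setOf_eq, if_pos h]
    exact min_le_left _ _
  · simp only [Set.indicator_apply, Set.mem_setOf_eq, if_neg h]
    have h2 : |x| - M < 0 := by simpa [sub_neg] using lt_of_not_ge h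
    show min 1 (max 0 (|x| - M)) ≤ 0
    rw [max_eq_left h2.le, min_eq_right zero_le_one]

lemma indicator_le_cutoffAbs (M : ℝ) (x : ℝ) :
    Set.indicator {y : ℝ | M + 1 ≤ |y|} (fun _ => (1:ℝ)) x ≤ cutoffAbs M x := by
  by_cases h : M + 1 ≤ |x|
  · simp only [Set.indicator_apply, Set.mem_setOf_eq, if_pos h]
    have h1 : (1:ℝ) ≤ |x| - M := by linarith
    show (1:ℝ) ≤ min 1 (max 0 (|x| - M))
    rw [min_eq_left (le_max_of_le_right h1)]
  · simp only [Set.indicator_apply, Set.mem_setOf_eq, if_neg h]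
    exact cutoffAbs_nonneg M x

/-- tail of a finite measure on ℝ is eventually small -/
lemma tail_small (ρ : Measure ℝ) [IsFiniteMeasure ρ] {ε : ℝ} (hε : 0 < ε) :
    ∃ M : ℝ, 1 ≤ M ∧ (ρ {x : ℝ | M ≤ |x|}).toReal ≤ ε := by
  set s : ℕ → Set ℝ := fun n => {x : ℝ | (n:ℝ) ≤ |x|} with hs
  have hms : ∀ n, MeasurableSet (s n) := fun n =>
    (isClosed_le continuous_const continuous_abs).measurableSet
  have hanti : Antitone s := by
    intro n m hnm x hx
    simp only [hs, Set.mem_setOf_eq] at *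
    exact le_trans (Nat.cast_le.mpr hnm) hx
  have hIe : ⋂ n, s n = ∅ := by
    ext x
    simp only [Set.mem_iInter, Set.mem_empty_iff_false, iff_false, not_forall]
    obtain ⟨n, hn⟩ := exists_nat_gt |x|
    exact ⟨n, by simp [hs, not_le.mpr hn]⟩
  have htend : Tendsto (fun n => ρ (s n)) atTop (𝓝 0) := by
    have := tendsto_measure_iInter_atTop (μ := ρ) (fun n => (hms n).nullMeasurableSet) hanti ⟨0, measure_ne_top _ _⟩
    rwa [hIe, measure_empty] at this
  have hev : ∀ᶠ n in atTop, ρ (s n) < ENNReal.ofReal ε :=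
    htend.eventually_lt_const (by simpa using ENNReal.ofReal_pos.mpr hε)
  obtain ⟨n, hn⟩ := hev.exists
  refine ⟨max n 1, le_max_right _ _, ?_⟩
  have hsub : {x : ℝ | max (n:ℝ) 1 ≤ |x|} ⊆ s n := by
    intro x hx
    simp only [hs, Set.mem_setOf_eq] at *
    exact le_trans (le_max_left _ _) hx
  calc (ρ {x : ℝ | max (n:ℝ) 1 ≤ |x|}).toReal ≤ (ρ (s n)).toReal :=
        ENNReal.toReal_mono (measure_ne_top _ _) (measure_mono hsub)
    _ ≤ ε := ENNReal.toReal_le_of_le_ofReal hε.le hn.le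

lemma absSet_meas (M : ℝ) : MeasurableSet {x : ℝ | M ≤ |x|} :=
  (isClosed_le continuous_const continuous_abs).measurableSet

lemma meas_absXSet {Ω : Type*} [MeasurableSpace Ω] {X : Ω → ℝ} (hX : Measurable X) (c : ℝ) :
    MeasurableSet {ω | c ≤ |X ω|} := hX (absSet_meas c)

lemma integrable_bcf_comp {Ω : Type*} [MeasurableSpace Ω] {P : Measure Ω} [IsFiniteMeasure P]
    (ψ : BoundedContinuousFunction ℝ ℝ) {X : Ω → ℝ} (hX : Measurable X) :
    Integrable (fun ω => ψ (X ω)) P :=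
  Integrable.mono' (integrable_const ‖ψ‖)
    ((ψ.continuous.measurable.comp hX).aestronglyMeasurable)
    (ae_of_all _ fun ω => ψ.norm_coe_le_norm _)

/-- a sequence converging in distribution is uniformly tight -/
lemma tight_of_conv {Ω : Type*} [MeasurableSpace Ω] (P : Measure Ω) [IsProbabilityMeasure P]
    (X : ℕ → Ω → ℝ) (hX : ∀ n, Measurable (X n)) (μ : Measure ℝ) [IsProbabilityMeasure μ]
    (h : ConvInDist P X μ) {ε : ℝ} (hε : 0 < ε) :
    ∃ M : ℝ, 1 ≤ M ∧ (μ {x : ℝ | M ≤ |x|}).toReal ≤ ε ∧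
      ∀ n, (P {ω | M ≤ |X n ω|}).toReal ≤ ε := by
  obtain ⟨M₀, hM₀1, hM₀⟩ := tail_small μ (half_pos hε)
  set ψ := cutoffAbs M₀ with hψ
  -- the limit integral is ≤ ε/2
  have hlim : ∫ x, ψ x ∂μ ≤ ε / 2 := by
    have hmono : ∫ x, ψ x ∂μ ≤ ∫ x, Set.indicator {y : ℝ | M₀ ≤ |y|} (fun _ => (1:ℝ)) x ∂μ := by
      apply integral_mono (ψ.integrable μ)
      · exact (integrable_const (1:ℝ)).indicator (absSet_meas M₀)
      · exact fun x => cutoffAbs_le_indicator M₀ x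
    have : ∫ x, Set.indicator {y : ℝ | M₀ ≤ |y|} (fun _ => (1:ℝ)) x ∂μ
        = (μ {y : ℝ | M₀ ≤ |y|}).toReal := by
      rw [integral_indicator (absSet_meas M₀)]
      simp [Measure.real]
    linarith [hmono, this ▸ hmono, hM₀]
  -- eventually the integrals are < ε
  have hev : ∀ᶠ n in atTop, ∫ ω, ψ (X n ω) ∂P < ε := by
    apply (h ψ).eventually_lt_const
    linarith
  obtain ⟨n₀, hn₀⟩ := eventually_atTop.mp hev
  -- individual tightness for n < n₀
  have hmapP : ∀ n, IsProbabilityMeasure (Measure.map (X n) P) := fun n =>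
    Measure.isProbabilityMeasure_map (hX n).aemeasurable
  choose Mf hMf1 hMf2 using fun n => by
    haveI := hmapP n
    exact tail_small (Measure.map (X n) P) hε
  obtain ⟨B, hB⟩ := ((Set.finite_Iio n₀).image Mf).bddAbove
  refine ⟨max (M₀ + 1) (max B 1), ?_, ?_, ?_⟩
  · exact le_trans (le_max_right B 1) (le_max_right _ _)
  · -- μ tail
    have hsub : {x : ℝ | max (M₀ + 1) (max B 1) ≤ |x|} ⊆ {x : ℝ | M₀ ≤ |x|} := by
      intro x hx
      simp only [Set.mem_setOf_eq] at *
      have : M₀ + 1 ≤ |x| := le_trans (le_max_left _ _) hx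
      linarith
    exact le_trans (ENNReal.toReal_mono (measure_ne_top _ _) (measure_mono hsub))
      (le_trans hM₀ (by linarith))
  · intro n
    rcases lt_or_ge n n₀ with hn | hn
    · -- small n : use individual tightness
      have hMle : Mf n ≤ max (M₀ + 1) (max B 1) := by
        have : Mf n ≤ B := hB (Set.mem_image_of_mem Mf hn)
        exact le_trans (le_trans this (le_max_left B 1)) (le_max_right _ _)
      have hsub : {ω | max (M₀ + 1) (max B 1) ≤ |X n ω|} ⊆ {ω | Mf n ≤ |X n ω|} := by
        intro ω hω
        simp only [Set.mem_setOf_eq] at *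
        linarith
      have heq : P {ω | Mf n ≤ |X n ω|} = (Measure.map (X n) P) {x : ℝ | Mf n ≤ |x|} := by
        rw [Measure.map_apply (hX n) (absSet_meas (Mf n))]
        rfl
      calc (P {ω | max (M₀ + 1) (max B 1) ≤ |X n ω|}).toReal
          ≤ (P {ω | Mf n ≤ |X n ω|}).toReal :=
            ENNReal.toReal_mono (measure_ne_top _ _) (measure_mono hsub)
        _ ≤ ε := by rw [heq]; exact hMf2 n
    · -- large n : use the cutoff function
      have hind : (P {ω | M₀ + 1 ≤ |X n ω|}).toReal ≤ ∫ ω, ψ (X n ω) ∂P := by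
        have h1 : (P {ω | M₀ + 1 ≤ |X n ω|}).toReal
            = ∫ ω, Set.indicator {y : ℝ | M₀ + 1 ≤ |y|} (fun _ => (1:ℝ)) (X n ω) ∂P := by
          have heqf : (fun ω => Set.indicator {y : ℝ | M₀ + 1 ≤ |y|} (fun _ => (1:ℝ)) (X n ω))
              = Set.indicator {ω | M₀ + 1 ≤ |X n ω|} (fun _ => (1:ℝ)) := by
            funext ω
            by_cases h : M₀ + 1 ≤ |X n ω|
            · simp only [Set.indicator_apply, Set.mem_setOf_eq, if_pos h]
            · simp only [Set.indicator_apply, Set.mem_setOf_eq, if_neg h]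
          rw [heqf, integral_indicator (meas_absXSet (hX n) (M₀ + 1))]
          simp [Measure.real]
        rw [h1]
        apply integral_mono
        · exact (integrable_const (1:ℝ)).indicator (meas_absXSet (hX n) (M₀ + 1))
        · exact integrable_bcf_comp ψ (hX n)
        · exact fun ω => indicator_le_cutoffAbs M₀ (X n ω)
      have hsub : {ω | max (M₀ + 1) (max B 1) ≤ |X n ω|} ⊆ {ω | M₀ + 1 ≤ |X n ω|} := by
        intro ω hω
        simp only [Set.mem_setOf_eq] at *
        exact le_trans (le_max_left _ _) hω
      calc (P {ω | max (M₀ + 1) (max B 1) ≤ |X n ω|}).toReal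
          ≤ (P {ω | M₀ + 1 ≤ |X n ω|}).toReal :=
            ENNReal.toReal_mono (measure_ne_top _ _) (measure_mono hsub)
        _ ≤ ∫ ω, ψ (X n ω) ∂P := hind
        _ ≤ ε := (hn₀ n hn).le
section decomp
variable {Ω : Type*} [MeasurableSpace Ω] (P : Measure Ω) [IsProbabilityMeasure P]
  (Nf : Ω → ℕ)
variable (hNf : Measurable Nf)

include hNf in
lemma fiber_meas (k : ℕ) : MeasurableSet {ω | Nf ω = k} :=
  hNf (measurableSet_singleton k)

lemma fiber_disj : Pairwise (Function.onFun Disjoint (fun k => {ω | Nf ω = k})) := by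
  intro i j hij
  simp only [Function.onFun, Set.disjoint_left]
  intro ω hi hj
  exact hij (hi ▸ hj ▸ rfl)

lemma fiber_union : ⋃ k, {ω | Nf ω = k} = (Set.univ : Set Ω) := by
  ext ω; simp

include hNf in
/-- decomposition of an integral over the fibers of a ℕ-valued random variable -/
lemma integral_fiber_decomp {φ : Ω → ℝ} (hφ : Integrable φ P) :
    ∫ ω, φ ω ∂P = ∑' k, ∫ ω in {ω | Nf ω = k}, φ ω ∂P := by
  rw [← setIntegral_univ (μ := P) (f := φ), ← fiber_union Nf]
  exact integral_iUnion (fiber_meas Nf hNf) (fiber_disj Nf) hφ.integrableOn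

include hNf in
/-- integral of a bounded function of a ℕ-valued RV -/
lemma integral_comp_nat {φ : ℕ → ℝ} {C : ℝ} (hC : ∀ k, |φ k| ≤ C) :
    ∫ ω, φ (Nf ω) ∂P = ∑' k, (P {ω | Nf ω = k}).toReal * φ k := by
  have hint : Integrable (fun ω => φ (Nf ω)) P := by
    apply Integrable.mono' (integrable_const C)
    · exact ((measurable_from_top (f := φ)).comp hNf).aestronglyMeasurable
    · exact ae_of_all _ fun ω => by simpa using hC (Nf ω)
  rw [integral_fiber_decomp P Nf hNf hint]
  congr 1
  funext k
  rw [setIntegral_congr_fun (fiber_meas Nf hNf k) (g := fun _ => φ k)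
    (fun ω hω => by simp only [Set.mem_setOf_eq] at hω; rw [hω])]
  rw [setIntegral_const]
  simp [mul_comm, Measure.real]

end decomp
/-- key independence decomposition -/
lemma indep_decomp {Ω : Type*} [MeasurableSpace Ω] (P : Measure Ω) [IsProbabilityMeasure P]
    (W : ℕ → Ω → ℝ) (hWm : ∀ n, Measurable (W n)) (Nf : Ω → ℕ) (hNf : Measurable Nf)
    (hI : IndepFun (fun ω k => W k ω) Nf P) (f : BoundedContinuousFunction ℝ ℝ) (a : ℝ) :
    ∫ ω, f (a * W (Nf ω) ω) ∂P
      = ∑' k, (P {ω | Nf ω = k}).toReal * ∫ ω, f (a * W k ω) ∂P := by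
  have hbig : Measurable (fun ω => W (Nf ω) ω) := by
    have heval : Measurable (fun p : (ℕ → ℝ) × ℕ => p.1 p.2) :=
      measurable_from_prod_countable_left (fun k => measurable_pi_apply k)
    exact heval.comp ((measurable_pi_lambda _ (fun k => hWm k)).prodMk hNf)
  have hint : Integrable (fun ω => f (a * W (Nf ω) ω)) P :=
    Integrable.mono' (integrable_const ‖f‖)
      ((f.continuous.measurable.comp (measurable_const.mul hbig)).aestronglyMeasurable)
      (ae_of_all _ fun ω => f.norm_coe_le_norm _)
  rw [integral_fiber_decomp P Nf hNf hint]
  congr 1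
  funext k
  -- on the fiber, replace Nf ω by k
  rw [setIntegral_congr_fun (fiber_meas Nf hNf k) (g := fun ω => f (a * W k ω))
    (fun ω hω => by simp only [Set.mem_setOf_eq] at hω; rw [hω])]
  -- turn set integral into indicator
  rw [← integral_indicator (fiber_meas Nf hNf k)]
  have hrw : Set.indicator {ω | Nf ω = k} (fun ω => f (a * W k ω))
      = fun ω => (Set.indicator ({k} : Set ℕ) (fun _ => (1:ℝ)) (Nf ω)) * f (a * W k ω) := by
    funext ω
    by_cases h : Nf ω = k
    · simp [Set.indicator_apply, h]
    · simp [Set.indicator_apply, h]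
  rw [hrw]
  -- independence
  have hφ₁ : Measurable (fun m : ℕ => Set.indicator ({k} : Set ℕ) (fun _ => (1:ℝ)) m) :=
    measurable_const.indicator (measurableSet_singleton k)
  have hφ₂ : Measurable (fun w : ℕ → ℝ => f (a * w k)) :=
    f.continuous.measurable.comp (measurable_const.mul (measurable_pi_apply k))
  have hI' : IndepFun (fun ω => Set.indicator ({k} : Set ℕ) (fun _ => (1:ℝ)) (Nf ω))
      (fun ω => f (a * W k ω)) P := (hI.symm).comp hφ₁ hφ₂
  have hmul := hI'.integral_mul_eq_mul_integral
    ((hφ₁.comp hNf).aestronglyMeasurable)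
    ((hφ₂.comp (measurable_pi_lambda _ (fun j => hWm j))).aestronglyMeasurable)
  have hXint : ∫ ω, Set.indicator ({k} : Set ℕ) (fun _ => (1:ℝ)) (Nf ω) ∂P
      = (P {ω | Nf ω = k}).toReal := by
    have : (fun ω => Set.indicator ({k} : Set ℕ) (fun _ => (1:ℝ)) (Nf ω))
        = Set.indicator {ω | Nf ω = k} (fun _ => (1:ℝ)) := by
      funext ω
      by_cases h : Nf ω = k <;> simp [Set.indicator_apply, h]
    rw [this, integral_indicator (fiber_meas Nf hNf k)]
    simp [Measure.real]
  calc ∫ ω, (Set.indicator ({k} : Set ℕ) (fun _ => (1:ℝ)) (Nf ω)) * f (a * W k ω) ∂P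
      = (∫ ω, Set.indicator ({k} : Set ℕ) (fun _ => (1:ℝ)) (Nf ω) ∂P)
        * ∫ ω, f (a * W k ω) ∂P := hmul
    _ = (P {ω | Nf ω = k}).toReal * ∫ ω, f (a * W k ω) ∂P := by rw [hXint]
/-- oscillation estimate: the map c ↦ E f(cX) is equicontinuous given a tail bound -/
lemma osc_est {Ω : Type*} [MeasurableSpace Ω] (P : Measure Ω) [IsProbabilityMeasure P]
    (f : BoundedContinuousFunction ℝ ℝ) (X : Ω → ℝ) (hX : Measurable X)
    {εu M M' θ : ℝ} (htail : (P {ω | M' ≤ |X ω|}).toReal ≤ εu)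
    (hunif : ∀ y z : ℝ, |y| ≤ M * M' → |z| ≤ M * M' → |y - z| ≤ θ → |f y - f z| ≤ εu)
    {c c' : ℝ} (hc : c ∈ Set.Icc 0 M) (hc' : c' ∈ Set.Icc 0 M) (hcc' : |c - c'| * M' ≤ θ) :
    |(∫ ω, f (c * X ω) ∂P) - ∫ ω, f (c' * X ω) ∂P| ≤ εu + 2 * ‖f‖ * εu := by
  have hεu : 0 ≤ εu := le_trans ENNReal.toReal_nonneg htail
  have hS : MeasurableSet {ω | M' ≤ |X ω|} :=
    hX ((isClosed_le continuous_const continuous_abs).measurableSet)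
  have I1 : Integrable (fun ω => f (c * X ω)) P := integrable_bcf_comp f (hX.const_mul c)
  have I2 : Integrable (fun ω => f (c' * X ω)) P := integrable_bcf_comp f (hX.const_mul c')
  rw [← integral_sub I1 I2]
  have habs : |∫ ω, (f (c * X ω) - f (c' * X ω)) ∂P|
      ≤ ∫ ω, |f (c * X ω) - f (c' * X ω)| ∂P := by
    rw [← Real.norm_eq_abs]
    refine le_trans (norm_integral_le_integral_norm _) ?_
    simp [Real.norm_eq_abs]
  refine le_trans habs ?_
  have hpt : ∀ ω, |f (c * X ω) - f (c' * X ω)|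
      ≤ εu + Set.indicator {ω | M' ≤ |X ω|} (fun _ => 2 * ‖f‖) ω := by
    intro ω
    by_cases h : M' ≤ |X ω|
    · simp only [Set.indicator_apply, Set.mem_setOf_eq, if_pos h]
      have h1 : |f (c * X ω)| ≤ ‖f‖ := by
        rw [← Real.norm_eq_abs]; exact f.norm_coe_le_norm _
      have h2 : |f (c' * X ω)| ≤ ‖f‖ := by
        rw [← Real.norm_eq_abs]; exact f.norm_coe_le_norm _
      have := abs_sub (f (c * X ω)) (f (c' * X ω))
      nlinarith [abs_sub_abs_le_abs_sub (f (c * X ω)) (f (c' * X ω)),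
        abs_sub (f (c * X ω)) (f (c' * X ω))]
    · simp only [Set.indicator_apply, Set.mem_setOf_eq, if_neg h]
      push_neg at h
      have hx : |X ω| ≤ M' := h.le
      have hM' : 0 ≤ M' := le_trans (abs_nonneg _) hx
      have hMnn : 0 ≤ M := le_trans hc.1 hc.2
      have h1 : |c * X ω| ≤ M * M' := by
        rw [abs_mul, abs_of_nonneg hc.1]
        exact mul_le_mul hc.2 hx (abs_nonneg _) hMnn
      have h2 : |c' * X ω| ≤ M * M' := by
        rw [abs_mul, abs_of_nonneg hc'.1]
        exact mul_le_mul hc'.2 hx (abs_nonneg _) hMnn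
      have h3 : |c * X ω - c' * X ω| ≤ θ := by
        rw [← sub_mul, abs_mul]
        exact le_trans (mul_le_mul_of_nonneg_left hx (abs_nonneg _)) hcc'
      simpa using hunif _ _ h1 h2 h3
  have hrhs_int : Integrable
      (fun ω => εu + Set.indicator {ω | M' ≤ |X ω|} (fun _ => 2 * ‖f‖) ω) P :=
    (integrable_const εu).add ((integrable_const _).indicator hS)
  refine le_trans (integral_mono (I1.sub I2).abs hrhs_int hpt) ?_
  rw [integral_add (integrable_const εu) ((integrable_const _).indicator hS),
    integral_const, integral_indicator_const _ hS]
  simp only [Measure.real, measure_univ, ENNReal.toReal_one, smul_eq_mul, one_smul]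
  have : (P {ω | M' ≤ |X ω|}).toReal * (2 * ‖f‖) ≤ εu * (2 * ‖f‖) := by
    apply mul_le_mul_of_nonneg_right htail
    positivity
  nlinarith [this]
set_option maxHeartbeats 1000000 in
/-- Transfer theorem: Let (W_n) be random variables and (N_n) natural-valued
random variables, N_n independent of the whole sequence (W_k).  If b_n⁻¹ W_n ⇒ W for
positive constants b_n → ∞, and d_n⁻¹ b_{N_n} ⇒ N for positive constants d_n → ∞, then
d_n⁻¹ W_{N_n} ⇒ W · N, with W and N independent on the right-hand side (so the limit law is
the pushforward of the product of the two limit laws under multiplication). -/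
theorem transfer_theorem
    {Ω : Type*} [MeasurableSpace Ω] (P : Measure Ω) [IsProbabilityMeasure P]
    (W : ℕ → Ω → ℝ) (N : ℕ → Ω → ℕ)
    (hWm : ∀ n, Measurable (W n)) (hNm : ∀ n, Measurable (N n))
    (hInd : ∀ n, IndepFun (fun ω k => W k ω) (N n) P)
    (b d : ℕ → ℝ) (hb : ∀ n, 0 < b n) (hd : ∀ n, 0 < d n)
    (hbtop : Tendsto b atTop atTop) (hdtop : Tendsto d atTop atTop)
    (μW μN : Measure ℝ) [IsProbabilityMeasure μW] [IsProbabilityMeasure μN]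
    (hWconv : ConvInDist P (fun n ω => (b n)⁻¹ * W n ω) μW)
    (hNconv : ConvInDist P (fun n ω => (d n)⁻¹ * b (N n ω)) μN) :
    ConvInDist P (fun n ω => (d n)⁻¹ * W (N n ω) ω)
      (Measure.map (fun p : ℝ × ℝ => p.1 * p.2) (μW.prod μN)) := by
  intro f
  set C : ℝ := ‖f‖ with hCdef
  have hC : ∀ x, |f x| ≤ C := fun x => by
    rw [← Real.norm_eq_abs]; exact f.norm_coe_le_norm x
  have hC0 : 0 ≤ C := norm_nonneg f
  -- normalized variables
  have hVm : ∀ k, Measurable (fun ω => (b k)⁻¹ * W k ω) := fun k => (hWm k).const_mul _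
  -- the functions Φ k and g
  set Φ : ℕ → ℝ → ℝ := fun k c => ∫ ω, f (c * ((b k)⁻¹ * W k ω)) ∂P with hΦdef
  set g : ℝ → ℝ := fun c => ∫ x, f (c * x) ∂μW with hgdef
  have hΦbd : ∀ k c, |Φ k c| ≤ C := by
    intro k c
    rw [← Real.norm_eq_abs]
    calc ‖Φ k c‖ ≤ C * (P Set.univ).toReal := by
          apply norm_integral_le_of_norm_le_const
          exact ae_of_all _ fun a => by rw [Real.norm_eq_abs]; exact hC _
      _ = C := by simp
  have hgbd : ∀ c, |g c| ≤ C := by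
    intro c
    rw [← Real.norm_eq_abs]
    calc ‖g c‖ ≤ C * (μW Set.univ).toReal := by
          apply norm_integral_le_of_norm_le_const
          exact ae_of_all _ fun a => by rw [Real.norm_eq_abs]; exact hC _
      _ = C := by simp
  have hgcont : Continuous g := by
    apply continuous_of_dominated (bound := fun _ => C)
    · exact fun c => (f.continuous.measurable.comp (measurable_id.const_mul c)).aestronglyMeasurable
    · exact fun c => ae_of_all _ fun x => by rw [Real.norm_eq_abs]; exact hC _
    · exact integrable_const C
    · exact ae_of_all _ fun x => f.continuous.comp (continuous_mul_right x)
  set G : BoundedContinuousFunction ℝ ℝ := ⟨⟨g, hgcont⟩, 2 * C, by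
    intro x y
    have h1 := abs_le.mp (hgbd x)
    have h2 := abs_le.mp (hgbd y)
    rw [Real.dist_eq, abs_le]
    constructor <;> linarith⟩ with hGdef
  have hGcoe : ∀ y, G y = g y := fun y => rfl
  -- the limit identity
  have hGlim : ∫ x, f x ∂(Measure.map (fun p : ℝ × ℝ => p.1 * p.2) (μW.prod μN))
      = ∫ y, G y ∂μN := by
    rw [integral_map (φ := fun p : ℝ × ℝ => p.1 * p.2) (measurable_fst.mul measurable_snd).aemeasurable
      f.continuous.aestronglyMeasurable]
    have hFint : Integrable (fun p : ℝ × ℝ => f (p.1 * p.2)) (μW.prod μN) := by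
      have := (f.compContinuous
        (⟨fun p : ℝ × ℝ => p.1 * p.2, continuous_fst.mul continuous_snd⟩ : C(ℝ × ℝ, ℝ))).integrable
        (μW.prod μN)
      exact this
    rw [integral_prod_symm _ hFint]
    apply integral_congr_ae
    apply ae_of_all _ fun y => ?_
    rw [hGcoe, hgdef]
    simp only []
    congr 1
    funext x
    rw [mul_comm]
  have hA := hNconv G
  rw [hGlim]
  -- probabilities and scales
  set ps : ℕ → ℕ → ℝ := fun n k => (P {ω | N n ω = k}).toReal with hpsdef
  set cs : ℕ → ℕ → ℝ := fun n k => (d n)⁻¹ * b k with hcsdef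
  have hcnn : ∀ n k, 0 ≤ cs n k := fun n k =>
    mul_nonneg (inv_nonneg.mpr (hd n).le) (hb k).le
  have hpnn : ∀ n k, 0 ≤ ps n k := fun n k => ENNReal.toReal_nonneg
  have hpsum_e : ∀ n, ∑' k, P {ω | N n ω = k} = 1 := by
    intro n
    rw [← measure_iUnion (fiber_disj (N n)) (fiber_meas (N n) (hNm n)), fiber_union]
    exact measure_univ
  have hpsummable : ∀ n, Summable (ps n) := fun n =>
    ENNReal.summable_toReal (by rw [hpsum_e n]; exact ENNReal.one_ne_top)
  have hpsum : ∀ n, ∑' k, ps n k = 1 := by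
    intro n
    rw [hpsdef]
    rw [← ENNReal.tsum_toReal_eq (fun k => measure_ne_top _ _), hpsum_e n, ENNReal.toReal_one]
  -- identity 1
  have hIdent1 : ∀ n, ∫ ω, f ((d n)⁻¹ * W (N n ω) ω) ∂P = ∑' k, ps n k * Φ k (cs n k) := by
    intro n
    rw [indep_decomp P W hWm (N n) (hNm n) (hInd n) f ((d n)⁻¹)]
    apply tsum_congr
    intro k
    have harg : ∀ ω, cs n k * ((b k)⁻¹ * W k ω) = (d n)⁻¹ * W k ω := by
      intro ω
      rw [hcsdef]
      simp only []
      rw [mul_assoc, mul_inv_cancel_left₀ (hb k).ne']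
    rw [hΦdef, hpsdef]
    simp only []
    congr 1
    exact integral_congr_ae (ae_of_all _ fun ω => by
      show f ((d n)⁻¹ * W k ω) = f (cs n k * ((b k)⁻¹ * W k ω))
      rw [harg ω])
  -- identity 2
  have hIdent2 : ∀ n, ∫ ω, G ((d n)⁻¹ * b (N n ω)) ∂P = ∑' k, ps n k * g (cs n k) := by
    intro n
    have h := integral_comp_nat P (N n) (hNm n) (φ := fun k => g (cs n k)) (C := C)
      (fun k => hgbd _)
    exact h
  -- the key difference estimate
  have key : Tendsto (fun n => (∫ ω, f ((d n)⁻¹ * W (N n ω) ω) ∂P)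
      - ∫ ω, G ((d n)⁻¹ * b (N n ω)) ∂P) atTop (𝓝 0) := by
    rw [NormedAddCommGroup.tendsto_nhds_zero]
    intro ε hε
    set εu : ℝ := (ε / 4) / (3 * (2 * C + 1)) with hεudef
    have hεu : 0 < εu := by positivity
    obtain ⟨M', hM'1, hμWtail, hVtail⟩ :=
      tight_of_conv P (fun k ω => (b k)⁻¹ * W k ω) hVm μW hWconv hεu
    have hM'0 : (0:ℝ) < M' := lt_of_lt_of_le one_pos hM'1
    set ε₂ : ℝ := ε / (4 * (C + 1)) with hε₂def
    have hε₂ : 0 < ε₂ := by positivity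
    have hNXm : ∀ n, Measurable (fun ω => (d n)⁻¹ * b (N n ω)) := fun n =>
      ((measurable_from_top (f := b)).comp (hNm n)).const_mul _
    obtain ⟨M, hM1, -, hNtail⟩ :=
      tight_of_conv P (fun n ω => (d n)⁻¹ * b (N n ω)) hNXm μN hNconv hε₂
    have hM0 : (0:ℝ) < M := lt_of_lt_of_le one_pos hM1
    -- uniform continuity on the compact [-M*M', M*M']
    obtain ⟨θ, hθ0, huc⟩ : ∃ θ : ℝ, 0 < θ ∧ ∀ y z : ℝ, |y| ≤ M * M' → |z| ≤ M * M' →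
        |y - z| ≤ θ → |f y - f z| ≤ εu := by
      have hcomp : IsCompact (Set.Icc (-(M * M')) (M * M')) := isCompact_Icc
      have hucOn := hcomp.uniformContinuousOn_of_continuous f.continuous.continuousOn
      rw [Metric.uniformContinuousOn_iff] at hucOn
      obtain ⟨δ, hδ0, hδ⟩ := hucOn εu hεu
      refine ⟨δ / 2, half_pos hδ0, fun y z hy hz hyz => ?_⟩
      have hym : y ∈ Set.Icc (-(M * M')) (M * M') := abs_le.mp hy |> fun h => ⟨h.1, h.2⟩
      have hzm : z ∈ Set.Icc (-(M * M')) (M * M') := abs_le.mp hz |> fun h => ⟨h.1, h.2⟩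
      have : dist y z < δ := by
        rw [Real.dist_eq]; linarith [hyz]
      exact (le_of_lt (by simpa [Real.dist_eq] using hδ y hym z hzm this))
    set δc : ℝ := θ / M' with hδcdef
    have hδc0 : 0 < δc := div_pos hθ0 hM'0
    set εo : ℝ := εu + 2 * C * εu with hεodef
    -- pointwise convergence at net points
    have hptwise : ∀ cc : ℝ, Tendsto (fun k => Φ k cc) atTop (𝓝 (g cc)) := by
      intro cc
      have h := hWconv (f.compContinuous
        (⟨fun x => cc * x, continuous_const.mul continuous_id⟩ : C(ℝ, ℝ)))
      exact h
    set m : ℕ := ⌈M / δc⌉₊ with hmdef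
    have hnet : ∀ᶠ k : ℕ in atTop, ∀ i ∈ Finset.range (m + 1),
        |Φ k ((i : ℝ) * δc) - g ((i : ℝ) * δc)| ≤ εu := by
      rw [eventually_all_finset]
      intro i _
      have h2 := Metric.tendsto_nhds.mp (hptwise ((i : ℝ) * δc)) εu hεu
      filter_upwards [h2] with k hk
      rw [Real.dist_eq] at hk
      exact hk.le
    obtain ⟨K, hK⟩ := eventually_atTop.mp hnet
    -- the good-k estimate
    have hgood : ∀ k cc, 0 ≤ cc → cc ≤ M → (K ≤ k ∨ cc ≤ δc) → |Φ k cc - g cc| ≤ ε / 4 := by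
      intro k cc hcc0 hccM hcase
      have hosc : ∀ (c c' : ℝ), c ∈ Set.Icc 0 M → c' ∈ Set.Icc 0 M → |c - c'| * M' ≤ θ →
          |Φ k c - Φ k c'| ≤ εo := fun c c' h1 h2 h3 =>
        osc_est P f _ (hVm k) (hVtail k) huc h1 h2 h3
      have hoscg : ∀ (c c' : ℝ), c ∈ Set.Icc 0 M → c' ∈ Set.Icc 0 M → |c - c'| * M' ≤ θ →
          |g c - g c'| ≤ εo := by
        intro c c' h1 h2 h3
        have := osc_est (Ω := ℝ) μW f id measurable_id (εu := εu) (M := M) (M' := M')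
          (θ := θ) hμWtail huc h1 h2 h3
        simpa using this
      have hccIcc : cc ∈ Set.Icc 0 M := ⟨hcc0, hccM⟩
      rcases hcase with hKk | hccδ
      · -- use the net
        set i : ℕ := ⌊cc / δc⌋₊ with hidef
        have hi1 : (i : ℝ) * δc ≤ cc := by
          rw [← le_div_iff₀ hδc0]
          exact Nat.floor_le (div_nonneg hcc0 hδc0.le)
        have hi2 : cc < ((i : ℝ) + 1) * δc := by
          rw [← div_lt_iff₀ hδc0]
          exact_mod_cast Nat.lt_floor_add_one (cc / δc)
        have him : i ∈ Finset.range (m + 1) := by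
          rw [Finset.mem_range, Nat.lt_succ_iff, hmdef]
          have hdiv : cc / δc ≤ M / δc := by
            gcongr
          exact le_trans (Nat.floor_le_floor hdiv) (Nat.floor_le_ceil _)
        have hiIcc : (i : ℝ) * δc ∈ Set.Icc 0 M :=
          ⟨mul_nonneg (Nat.cast_nonneg i) hδc0.le, le_trans hi1 hccM⟩
        have hdist : |cc - (i : ℝ) * δc| * M' ≤ θ := by
          rw [abs_of_nonneg (by linarith)]
          have : cc - (i : ℝ) * δc ≤ δc := by linarith
          calc (cc - (i : ℝ) * δc) * M' ≤ δc * M' :=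
                mul_le_mul_of_nonneg_right this hM'0.le
            _ = θ := by rw [hδcdef]; field_simp
        have h1 := hosc cc ((i : ℝ) * δc) hccIcc hiIcc hdist
        have h2 := hK k hKk i him
        have h3 := hoscg ((i : ℝ) * δc) cc hiIcc hccIcc (by
          rwa [abs_sub_comm] at hdist)
        have h5 : εu * (3 * (2 * C + 1)) = ε / 4 := by
          rw [hεudef]
          exact div_mul_cancel₀ _ (by positivity)
        have hεoval : 2 * εo + εu ≤ ε / 4 := by
          rw [hεodef]
          nlinarith [hεu.le, hC0, h5]
        have t1 := abs_sub_le (Φ k cc) (Φ k ((i:ℝ) * δc)) (g cc)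
        have t2 := abs_sub_le (Φ k ((i:ℝ) * δc)) (g ((i:ℝ) * δc)) (g cc)
        linarith
      · -- small cc
        have h0Icc : (0:ℝ) ∈ Set.Icc (0:ℝ) M := ⟨le_refl 0, hM0.le⟩
        have hdist : |cc - 0| * M' ≤ θ := by
          rw [sub_zero, abs_of_nonneg hcc0]
          calc cc * M' ≤ δc * M' := mul_le_mul_of_nonneg_right hccδ hM'0.le
            _ = θ := by rw [hδcdef]; field_simp
        have h1 := hosc cc 0 hccIcc h0Icc hdist
        have h2 := hoscg cc 0 hccIcc h0Icc hdist
        have hΦ0 : Φ k 0 = f 0 := by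
          rw [hΦdef]; simp
        have hg0 : g 0 = f 0 := by
          rw [hgdef]; simp
        rw [hΦ0] at h1
        rw [hg0] at h2
        have h5 : εu * (3 * (2 * C + 1)) = ε / 4 := by
          rw [hεudef]
          exact div_mul_cancel₀ _ (by positivity)
        have hεoval : 2 * εo ≤ ε / 4 := by
          rw [hεodef]
          nlinarith [hεu.le, hC0, h5]
        calc |Φ k cc - g cc| ≤ |Φ k cc - f 0| + |f 0 - g cc| := abs_sub_le _ _ _
          _ ≤ εo + εo := by
              refine add_le_add h1 ?_
              rwa [abs_sub_comm]
          _ ≤ ε / 4 := by linarith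
    -- eventually the small-index scales are small
    obtain ⟨Bm, hBm⟩ : ∃ Bm : ℝ, ∀ k < K, b k ≤ Bm := by
      obtain ⟨Bm, hBm⟩ := ((Set.finite_Iio K).image b).bddAbove
      exact ⟨Bm, fun k hk => hBm (Set.mem_image_of_mem b hk)⟩
    have hev2 : ∀ᶠ n in atTop, ∀ k < K, cs n k ≤ δc := by
      filter_upwards [hdtop.eventually_ge_atTop (Bm / δc)] with n hn k hk
      have hbk := hBm k hk
      rw [hcsdef]
      simp only []
      rw [inv_mul_le_iff₀ (hd n)]
      have : Bm ≤ d n * δc := by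
        rw [div_le_iff₀ hδc0] at hn
        linarith [hn]
      linarith
    -- the final estimate
    filter_upwards [hev2] with n hn
    rw [hIdent1 n, hIdent2 n]
    set q : ℕ → ℝ := fun k => if M ≤ cs n k then ps n k else 0 with hqdef
    have hqnn : ∀ k, 0 ≤ q k := by
      intro k; rw [hqdef]; dsimp only; split <;> [exact hpnn n k; exact le_refl 0]
    have hqlep : ∀ k, q k ≤ ps n k := by
      intro k; rw [hqdef]; dsimp only; split <;> [exact le_refl _; exact hpnn n k]
    have hqsummable : Summable q :=
      Summable.of_nonneg_of_le hqnn hqlep (hpsummable n)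
    have hsum1 : Summable (fun k => ps n k * Φ k (cs n k)) := by
      apply Summable.of_abs
      apply Summable.of_nonneg_of_le (fun k => abs_nonneg _) (fun k => ?_)
        ((hpsummable n).mul_left C)
      rw [abs_mul, abs_of_nonneg (hpnn n k), mul_comm]
      exact mul_le_mul_of_nonneg_right (hΦbd _ _) (hpnn n k)
    have hsum2 : Summable (fun k => ps n k * g (cs n k)) := by
      apply Summable.of_abs
      apply Summable.of_nonneg_of_le (fun k => abs_nonneg _) (fun k => ?_)
        ((hpsummable n).mul_left C)
      rw [abs_mul, abs_of_nonneg (hpnn n k), mul_comm]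
      exact mul_le_mul_of_nonneg_right (hgbd _) (hpnn n k)
    rw [← Summable.tsum_sub hsum1 hsum2]
    -- termwise bound
    have hterm : ∀ k, |ps n k * Φ k (cs n k) - ps n k * g (cs n k)|
        ≤ (ε / 4) * ps n k + (2 * C) * q k := by
      intro k
      rw [← mul_sub, abs_mul, abs_of_nonneg (hpnn n k)]
      by_cases hMc : M ≤ cs n k
      · have h1 : |Φ k (cs n k) - g (cs n k)| ≤ 2 * C := by
          have e1 := abs_le.mp (hΦbd k (cs n k))
          have e2 := abs_le.mp (hgbd (cs n k))
          rw [abs_le]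
          constructor <;> linarith
        have hq : q k = ps n k := by rw [hqdef]; simp [hMc]
        rw [hq]
        nlinarith [hpnn n k, mul_le_mul_of_nonneg_left h1 (hpnn n k), hε.le]
      · have hcase : K ≤ k ∨ cs n k ≤ δc := by
          by_cases hkK : k < K
          · exact Or.inr (hn k hkK)
          · exact Or.inl (le_of_not_gt hkK)
        have h1 := hgood k (cs n k) (hcnn n k) (lt_of_not_ge hMc).le hcase
        have hq : q k = 0 := by rw [hqdef]; simp [hMc]
        rw [hq]
        nlinarith [hpnn n k, mul_le_mul_of_nonneg_left h1 (hpnn n k), hε.le]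
    -- sum of the tail probabilities
    have hqval : ∑' k, q k ≤ ε₂ := by
      have hφbd : ∀ k : ℕ, |(if M ≤ cs n k then (1:ℝ) else 0)| ≤ 1 := by
        intro k; split <;> simp
      have hcomp := integral_comp_nat P (N n) (hNm n)
        (φ := fun k => if M ≤ cs n k then (1:ℝ) else 0) (C := 1) hφbd
      have hSmeas : MeasurableSet {ω | M ≤ (d n)⁻¹ * b (N n ω)} :=
        (hNXm n) measurableSet_Ici
      have hLHS : ∫ ω, (if M ≤ cs n (N n ω) then (1:ℝ) else 0) ∂P
          = (P {ω | M ≤ (d n)⁻¹ * b (N n ω)}).toReal := by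
        have heq : (fun ω => if M ≤ cs n (N n ω) then (1:ℝ) else 0)
            = Set.indicator {ω | M ≤ (d n)⁻¹ * b (N n ω)} (fun _ => (1:ℝ)) := by
          funext ω
          by_cases h : M ≤ (d n)⁻¹ * b (N n ω)
          · simp only [Set.indicator_apply, Set.mem_setOf_eq, if_pos h, hcsdef]
          · simp only [Set.indicator_apply, Set.mem_setOf_eq, if_neg h, hcsdef]
        rw [heq, integral_indicator hSmeas]
        simp [Measure.real]
      have hRHS : ∑' k, (P {ω | N n ω = k}).toReal * (if M ≤ cs n k then (1:ℝ) else 0)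
          = ∑' k, q k := by
        congr 1
        funext k
        rw [hqdef]
        dsimp only
        split <;> simp [hpsdef]
      have htail2 : (P {ω | M ≤ (d n)⁻¹ * b (N n ω)}).toReal ≤ ε₂ := by
        refine le_trans (ENNReal.toReal_mono (measure_ne_top _ _) (measure_mono ?_)) (hNtail n)
        intro ω hω
        simp only [Set.mem_setOf_eq] at *
        exact le_trans hω (le_abs_self _)
      rw [← hRHS, ← hcomp, hLHS]
      exact htail2
    -- put everything together
    have habs_sum : Summable (fun k => |ps n k * Φ k (cs n k) - ps n k * g (cs n k)|) := by
      apply Summable.of_nonneg_of_le (fun k => abs_nonneg _) hterm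
      exact ((hpsummable n).mul_left (ε / 4)).add (hqsummable.mul_left (2 * C))
    calc ‖∑' k, (ps n k * Φ k (cs n k) - ps n k * g (cs n k))‖
        ≤ ∑' k, ‖ps n k * Φ k (cs n k) - ps n k * g (cs n k)‖ := by
          apply norm_tsum_le_tsum_norm
          simpa [Real.norm_eq_abs] using habs_sum
      _ = ∑' k, |ps n k * Φ k (cs n k) - ps n k * g (cs n k)| := by simp [Real.norm_eq_abs]
      _ ≤ ∑' k, ((ε / 4) * ps n k + (2 * C) * q k) := by
          apply Summable.tsum_le_tsum hterm habs_sum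
          exact ((hpsummable n).mul_left (ε / 4)).add (hqsummable.mul_left (2 * C))
      _ = (ε / 4) * (∑' k, ps n k) + (2 * C) * ∑' k, q k := by
          rw [Summable.tsum_add ((hpsummable n).mul_left _) (hqsummable.mul_left _),
            tsum_mul_left, tsum_mul_left]
      _ = ε / 4 + (2 * C) * ∑' k, q k := by rw [hpsum n, mul_one]
      _ ≤ ε / 4 + (2 * C) * ε₂ := by
          have := mul_le_mul_of_nonneg_left hqval (by positivity : (0:ℝ) ≤ 2 * C)
          linarith
      _ < ε := by
          have h4 : (0:ℝ) < 4 * (C + 1) := by positivity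
          have key2 : ε / (4 * (C + 1)) * (4 * (C + 1)) = ε := div_mul_cancel₀ _ h4.ne'
          have ht : 0 ≤ ε / (4 * (C + 1)) := by positivity
          have h1 : (2 * C) * ε₂ ≤ ε / 2 := by
            rw [hε₂def]
            nlinarith [key2, ht, hC0]
          linarith
  -- conclusion
  have hfinal := key.add hA
  rw [zero_add] at hfinal
  convert hfinal using 2 with n
  ring
end
end

section
/- Let G₁ ~ Gamma(r, 1) and G₂ ~ Gamma(1−r, 1) be independent, 0 < r < 1, and let W ~ Exponential(1) be independent of them. Define Z = (G₁ + G₂)/G₁. Then W/Z has the same distribution as a Gamma(r, 1) random variable. -/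
open MeasureTheory ProbabilityTheory Real Set
open scoped ENNReal NNReal

noncomputable section

/-- The gamma density with shape r and rate μ. -/
def gammaPdf (r μ x : ℝ) : ℝ :=
  if 0 < x then (μ ^ r / Real.Gamma r) * x ^ (r - 1) * Real.exp (-(μ * x)) else 0

/-- The gamma distribution with shape r and rate μ, as a measure on ℝ. -/
def gammaLaw (r μ : ℝ) : Measure ℝ :=
  (volume : Measure ℝ).withDensity fun x => ENNReal.ofReal (gammaPdf r μ x)

namespace GleserAux

lemma gammaPdf_nonneg {a μ : ℝ} (ha : 0 < a) (hμ : 0 < μ) (x : ℝ) : 0 ≤ gammaPdf a μ x := by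
  unfold gammaPdf
  split_ifs with h
  · have := Real.Gamma_pos_of_pos ha
    positivity
  · exact le_refl 0

lemma measurable_gammaPdf (a μ : ℝ) : Measurable (gammaPdf a μ) := by
  unfold gammaPdf
  exact Measurable.ite measurableSet_Ioi
    (((measurable_id'.pow_const _).const_mul _).mul
      (measurable_id'.const_mul _).neg.exp) measurable_const

lemma gammaPdf_eq_pos {a μ x : ℝ} (hx : 0 < x) :
    gammaPdf a μ x = (μ ^ a / Real.Gamma a) * x ^ (a - 1) * Real.exp (-(μ * x)) := by
  simp [gammaPdf, hx]

lemma gammaPdf_one_eq {x : ℝ} (hx : 0 < x) :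
    gammaPdf a 1 x = (1 / Real.Gamma a) * (x ^ (a - 1) * Real.exp (-x)) := by
  rw [gammaPdf_eq_pos hx, Real.one_rpow, one_mul]
  ring

lemma gammaLaw_eq_gammaMeasure (a μ : ℝ) : gammaLaw a μ = gammaMeasure a μ := by
  unfold gammaLaw gammaMeasure
  apply withDensity_congr_ae
  have h0 : ∀ᵐ x : ℝ ∂volume, x ∉ ({0} : Set ℝ) :=
    measure_eq_zero_iff_ae_notMem.mp (volume_singleton)
  filter_upwards [h0] with x hx
  have hx' : x ≠ 0 := by simpa using hx
  rw [show gammaPDF a μ x = ENNReal.ofReal (gammaPDFReal a μ x) from rfl]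
  congr 1
  rcases lt_or_gt_of_ne hx' with h | h
  · simp [gammaPdf, gammaPDFReal, not_lt.mpr h.le, not_le.mpr h]
  · simp [gammaPdf, gammaPDFReal, h, h.le]

lemma isProbabilityMeasure_gammaLaw {a : ℝ} (ha : 0 < a) :
    IsProbabilityMeasure (gammaLaw a 1) := by
  rw [gammaLaw_eq_gammaMeasure]
  exact isProbabilityMeasure_gammaMeasure ha one_pos

lemma gammaLaw_Iic_zero (a μ : ℝ) : gammaLaw a μ (Iic 0) = 0 := by
  rw [gammaLaw, withDensity_apply _ measurableSet_Iic]
  rw [setLIntegral_congr_fun (g := fun _ => (0:ℝ≥0∞)) measurableSet_Iic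
    (fun x (hx : x ≤ 0) => by simp [gammaPdf, not_lt.mpr hx])]
  simp

lemma gammaLaw_ae_pos (a μ : ℝ) : ∀ᵐ x ∂(gammaLaw a μ), 0 < x := by
  rw [ae_iff]
  have : {x : ℝ | ¬ 0 < x} = Iic 0 := by ext x; simp
  rw [this]
  exact gammaLaw_Iic_zero a μ

lemma integrableOn_gamma_integrand {a : ℝ} (ha : 0 < a) :
    IntegrableOn (fun x => x ^ (a - 1) * Real.exp (-x)) (Ioi (0:ℝ)) := by
  have := Real.GammaIntegral_convergent ha
  exact this.congr_fun (fun x _ => mul_comm _ _) measurableSet_Ioi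

lemma integrable_gammaPdf {a : ℝ} (ha : 0 < a) : Integrable (gammaPdf a 1) := by
  rw [← integrableOn_univ, show (univ : Set ℝ) = Iic 0 ∪ Ioi 0 from (Iic_union_Ioi).symm]
  apply IntegrableOn.union
  · apply (integrableOn_congr_fun (g := fun _ => (0:ℝ)) ?_ measurableSet_Iic).mpr
    · exact integrableOn_zero
    · intro x hx; simp [gammaPdf, not_lt.mpr (mem_Iic.mp hx)]
  · apply IntegrableOn.congr_fun ((integrableOn_gamma_integrand ha).const_mul (1 / Real.Gamma a))
      (fun x hx => ?_) measurableSet_Ioi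
    rw [gammaPdf_one_eq (mem_Ioi.mp hx)]

lemma exp_tail {s : ℝ} (hs : 0 ≤ s) : gammaLaw 1 1 (Ioi s) = ENNReal.ofReal (Real.exp (-s)) := by
  rw [gammaLaw, withDensity_apply _ measurableSet_Ioi]
  rw [setLIntegral_congr_fun measurableSet_Ioi
    (fun x (hx : s < x) => ?_), ← ofReal_integral_eq_lintegral_ofReal
      ((exp_neg_integrableOn_Ioi s one_pos).congr_fun (g := fun x => Real.exp (-x)) (fun x _ => by dsimp only; rw [neg_one_mul])
        measurableSet_Ioi)
      (ae_of_all _ (fun x => (Real.exp_pos _).le)), integral_exp_neg_Ioi]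
  have hx0 : 0 < x := lt_of_le_of_lt hs hx
  rw [gammaPdf_one_eq hx0, Real.Gamma_one, sub_self, Real.rpow_zero]
  norm_num

lemma gamma_tail {a t : ℝ} (ha : 0 < a) (ht : 0 ≤ t) :
    gammaLaw a 1 (Ioi t)
      = ENNReal.ofReal ((1 / Real.Gamma a) * ∫ x in Ioi t, x ^ (a - 1) * Real.exp (-x)) := by
  rw [gammaLaw, withDensity_apply _ measurableSet_Ioi]
  rw [setLIntegral_congr_fun measurableSet_Ioi
    (fun x (hx : t < x) => by
      rw [gammaPdf_one_eq (lt_of_le_of_lt ht hx)])]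
  rw [← ofReal_integral_eq_lintegral_ofReal
    (((integrableOn_gamma_integrand ha).mono_set (Ioi_subset_Ioi ht)).const_mul _)
    ((ae_restrict_iff' measurableSet_Ioi).mpr (ae_of_all _ (fun x hx => by
      have hx0 : 0 < x := lt_of_le_of_lt ht (mem_Ioi.mp hx)
      have := Real.Gamma_pos_of_pos ha
      positivity)))]
  rw [integral_const_mul]

lemma inner_lintegral {r t x : ℝ} (hr1 : r < 1) (ht : 0 ≤ t) (hx : 0 < x) :
    (∫⁻ y, ENNReal.ofReal (Real.exp (-(t * ((x + y) / x)))) ∂(gammaLaw (1 - r) 1))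
      = ENNReal.ofReal (Real.exp (-t) * (x / (x + t)) ^ (1 - r)) := by
  set a := 1 - r with ha_def
  have ha : 0 < a := by simp [ha_def]; linarith
  have hgm : Measurable fun y : ℝ => ENNReal.ofReal (Real.exp (-(t * ((x + y) / x)))) := by
    apply ENNReal.measurable_ofReal.comp
    exact (((measurable_const.add measurable_id).div_const x).const_mul t).neg.exp
  rw [gammaLaw, lintegral_withDensity_eq_lintegral_mul _
    (measurable_gammaPdf a 1).ennreal_ofReal hgm]
  have hcomb : ∀ y : ℝ,
      (ENNReal.ofReal (gammaPdf a 1 y)) * ENNReal.ofReal (Real.exp (-(t * ((x + y) / x))))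
        = ENNReal.ofReal (gammaPdf a 1 y * Real.exp (-(t * ((x + y) / x)))) := fun y =>
    (ENNReal.ofReal_mul (gammaPdf_nonneg ha one_pos y)).symm
  simp only [Pi.mul_apply, Function.comp]
  rw [lintegral_congr fun y => hcomb y]
  set F : ℝ → ℝ := fun y => gammaPdf a 1 y * Real.exp (-(t * ((x + y) / x))) with hF
  have hFzero : ∀ y : ℝ, y ≤ 0 → F y = 0 := by
    intro y hy; simp [hF, gammaPdf, not_lt.mpr hy]
  have hFnn : ∀ y, 0 ≤ F y := fun y =>
    mul_nonneg (gammaPdf_nonneg ha one_pos y) (Real.exp_pos _).le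
  have hFm : Measurable F :=
    (measurable_gammaPdf a 1).mul
      ((((measurable_const.add measurable_id).div_const x).const_mul t).neg.exp)
  have hInt : Integrable F := by
    apply (integrable_gammaPdf ha).mono hFm.aestronglyMeasurable
    apply ae_of_all
    intro y
    rcases le_or_gt y 0 with hy | hy
    · rw [hFzero y hy]; simp [abs_nonneg]
    · rw [Real.norm_eq_abs, Real.norm_eq_abs, abs_of_nonneg (hFnn y),
        abs_of_nonneg (gammaPdf_nonneg ha one_pos y), hF]
      have hexp : Real.exp (-(t * ((x + y) / x))) ≤ 1 := by
        rw [Real.exp_le_one_iff]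
        have : 0 ≤ (x + y) / x := div_nonneg (by linarith) hx.le
        simp only [neg_nonpos]
        positivity
      calc gammaPdf a 1 y * Real.exp (-(t * ((x + y) / x)))
          ≤ gammaPdf a 1 y * 1 := by
            exact mul_le_mul_of_nonneg_left hexp (gammaPdf_nonneg ha one_pos y)
        _ = gammaPdf a 1 y := mul_one _
  rw [← ofReal_integral_eq_lintegral_ofReal hInt (ae_of_all _ hFnn)]
  congr 1
  rw [← setIntegral_eq_integral_of_forall_compl_eq_zero
    (s := Ioi (0:ℝ)) (fun y hy => hFzero y (not_lt.mp hy))]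
  have hc : 0 < (x + t) / x := div_pos (by linarith) hx
  rw [setIntegral_congr_fun measurableSet_Ioi
    (g := fun y => (1 / Real.Gamma a * Real.exp (-t)) *
      (y ^ (a - 1) * Real.exp (-((x + t) / x * y))))
    (fun y hy => ?_), integral_const_mul,
    integral_rpow_mul_exp_neg_mul_Ioi ha hc, one_div_div]
  · have hΓ : Real.Gamma a ≠ 0 := (Real.Gamma_pos_of_pos ha).ne'
    field_simp
  · have hy : 0 < y := hy
    show gammaPdf a 1 y * Real.exp (-(t * ((x + y) / x)))
      = 1 / Real.Gamma a * Real.exp (-t) * (y ^ (a - 1) * Real.exp (-((x + t) / x * y)))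
    rw [gammaPdf_one_eq hy]
    have hE : Real.exp (-y) * Real.exp (-(t * ((x + y) / x)))
        = Real.exp (-t) * Real.exp (-((x + t) / x * y)) := by
      rw [← Real.exp_add, ← Real.exp_add]
      congr 1
      field_simp
      ring
    linear_combination (1 / Real.Gamma a * y ^ (a - 1)) * hE

lemma outer_lintegral {r t : ℝ} (hr0 : 0 < r) (hr1 : r < 1) (ht : 0 ≤ t) :
    (∫⁻ x, ENNReal.ofReal
        (gammaPdf r 1 x * (Real.exp (-t) * (x / (x + t)) ^ (1 - r))) ∂volume)
      = gammaLaw r 1 (Ioi t) := by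
  set F : ℝ → ℝ := fun x => gammaPdf r 1 x * (Real.exp (-t) * (x / (x + t)) ^ (1 - r)) with hF
  have hFzero : ∀ x : ℝ, x ≤ 0 → F x = 0 := by
    intro x hx; simp [hF, gammaPdf, not_lt.mpr hx]
  have hFnn : ∀ x, 0 ≤ F x := by
    intro x
    rcases le_or_gt x 0 with hx | hx
    · rw [hFzero x hx]
    · apply mul_nonneg (gammaPdf_nonneg hr0 one_pos x)
      have hxt : 0 < x + t := by linarith
      have : 0 ≤ x / (x + t) := div_nonneg hx.le hxt.le
      positivity
  have hFm : Measurable F := by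
    apply (measurable_gammaPdf r 1).mul
    apply Measurable.const_mul
    exact (Real.continuous_rpow_const (by linarith : (0:ℝ) ≤ 1 - r)).measurable.comp
      (measurable_id.div (measurable_id.add_const t))
  have hInt : Integrable F := by
    apply (integrable_gammaPdf hr0).mono hFm.aestronglyMeasurable
    apply ae_of_all
    intro x
    rcases le_or_gt x 0 with hx | hx
    · rw [hFzero x hx]; simp [abs_nonneg]
    · rw [Real.norm_eq_abs, Real.norm_eq_abs, abs_of_nonneg (hFnn x),
        abs_of_nonneg (gammaPdf_nonneg hr0 one_pos x), hF]
      have hxt : 0 < x + t := by linarith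
      have h1 : (x / (x + t)) ^ (1 - r) ≤ 1 :=
        Real.rpow_le_one (div_nonneg hx.le hxt.le)
          ((div_le_one hxt).mpr (by linarith)) (by linarith)
      have h2 : Real.exp (-t) ≤ 1 := Real.exp_le_one_iff.mpr (by linarith)
      calc gammaPdf r 1 x * (Real.exp (-t) * (x / (x + t)) ^ (1 - r))
          ≤ gammaPdf r 1 x * (1 * 1) := by
            apply mul_le_mul_of_nonneg_left _ (gammaPdf_nonneg hr0 one_pos x)
            apply mul_le_mul h2 h1 _ zero_le_one
            have : 0 ≤ x / (x + t) := div_nonneg hx.le hxt.le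
            positivity
        _ = gammaPdf r 1 x := by ring
  rw [← ofReal_integral_eq_lintegral_ofReal hInt (ae_of_all _ hFnn),
    gamma_tail hr0 ht]
  congr 1
  rw [← setIntegral_eq_integral_of_forall_compl_eq_zero
    (s := Ioi (0:ℝ)) (fun x hx => hFzero x (not_lt.mp hx))]
  rw [setIntegral_congr_fun measurableSet_Ioi
    (g := fun x => 1 / Real.Gamma r * ((x + t) ^ (r - 1) * Real.exp (-(x + t))))
    (fun x hx => ?_), integral_const_mul]
  · congr 1
    have hemb := (measurableEmbedding_addRight t).setIntegral_map (μ := (volume : Measure ℝ))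
      (fun u => u ^ (r - 1) * Real.exp (-u)) (Ioi t)
    rw [map_add_right_eq_self volume t] at hemb
    rw [hemb]
    congr 1
    ext x
    simp [mem_preimage, mem_Ioi]
  · have hx : 0 < x := hx
    have hxt : 0 < x + t := by linarith
    show gammaPdf r 1 x * (Real.exp (-t) * (x / (x + t)) ^ (1 - r))
      = 1 / Real.Gamma r * ((x + t) ^ (r - 1) * Real.exp (-(x + t)))
    rw [gammaPdf_one_eq hx]
    have hdiv : (x / (x + t)) ^ (1 - r) = x ^ (1 - r) / (x + t) ^ (1 - r) :=
      Real.div_rpow hx.le hxt.le (1 - r)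
    have hxx : x ^ (r - 1) * x ^ (1 - r) = 1 := by
      rw [← Real.rpow_add hx]; norm_num
    have hxtpow : ((x + t) ^ (1 - r))⁻¹ = (x + t) ^ (r - 1) := by
      rw [← Real.rpow_neg hxt.le]; norm_num
    have hee : Real.exp (-x) * Real.exp (-t) = Real.exp (-(x + t)) := by
      rw [← Real.exp_add]; ring_nf
    have h2 : (x + t) ^ (r - 1) * (x + t) ^ (1 - r) = 1 := by
      rw [← Real.rpow_add hxt]; norm_num
    have hE : Real.exp (-t + -x) = Real.exp (-t) * Real.exp (-x) := Real.exp_add _ _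
    rw [hdiv]
    field_simp
    linear_combination (Real.exp (-x) * Real.exp (-t)) * hxx
      - Real.exp (-(x + t)) * h2 + hee

lemma ae_prod {α β : Type*} [MeasurableSpace α] [MeasurableSpace β]
    (μ : Measure α) (ν : Measure β) [SFinite μ] [SFinite ν] {p : α → Prop} {q : β → Prop}
    (h1 : ∀ᵐ x ∂μ, p x) (h2 : ∀ᵐ y ∂ν, q y) :
    ∀ᵐ z ∂(μ.prod ν), p z.1 ∧ q z.2 := by
  rw [ae_iff] at h1 h2 ⊢
  apply measure_mono_null
    (show {z : α × β | ¬(p z.1 ∧ q z.2)}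
        ⊆ ({x | ¬ p x} ×ˢ univ) ∪ (univ ×ˢ {y | ¬ q y}) from ?_)
  · apply measure_union_null
    · rw [Measure.prod_prod, h1, zero_mul]
    · rw [Measure.prod_prod, h2, mul_zero]
  · intro z hz
    by_cases hp : p z.1
    · right
      exact ⟨mem_univ _, fun hq => hz ⟨hp, hq⟩⟩
    · left
      exact ⟨hp, mem_univ _⟩

lemma tail_eq {r t : ℝ} (hr0 : 0 < r) (hr1 : r < 1) (ht : 0 ≤ t) :
    (((gammaLaw r 1).prod (gammaLaw (1 - r) 1)).prod (gammaLaw 1 1))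
      ((fun p : (ℝ × ℝ) × ℝ => p.2 / ((p.1.1 + p.1.2) / p.1.1)) ⁻¹' Ioi t)
      = gammaLaw r 1 (Ioi t) := by
  have hr2 : 0 < 1 - r := by linarith
  haveI h1 : IsProbabilityMeasure (gammaLaw r 1) := isProbabilityMeasure_gammaLaw hr0
  haveI h2 : IsProbabilityMeasure (gammaLaw (1 - r) 1) := isProbabilityMeasure_gammaLaw hr2
  haveI h3 : IsProbabilityMeasure (gammaLaw 1 1) := isProbabilityMeasure_gammaLaw one_pos
  have hfm : Measurable (fun p : (ℝ × ℝ) × ℝ => p.2 / ((p.1.1 + p.1.2) / p.1.1)) :=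
    measurable_snd.div ((measurable_fst.fst.add measurable_fst.snd).div measurable_fst.fst)
  rw [Measure.prod_apply (hfm measurableSet_Ioi)]
  have hae : ∀ᵐ p ∂((gammaLaw r 1).prod (gammaLaw (1 - r) 1)), 0 < p.1 ∧ 0 < p.2 :=
    ae_prod _ _ (gammaLaw_ae_pos r 1) (gammaLaw_ae_pos (1 - r) 1)
  have step1 : ∀ᵐ p ∂((gammaLaw r 1).prod (gammaLaw (1 - r) 1)),
      gammaLaw 1 1 (Prod.mk p ⁻¹'
          ((fun p : (ℝ × ℝ) × ℝ => p.2 / ((p.1.1 + p.1.2) / p.1.1)) ⁻¹' Ioi t))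
        = ENNReal.ofReal (Real.exp (-(t * ((p.1 + p.2) / p.1)))) := by
    filter_upwards [hae] with p hp
    have hk : 0 < (p.1 + p.2) / p.1 := div_pos (by linarith [hp.1, hp.2]) hp.1
    have hset : Prod.mk p ⁻¹'
          ((fun p : (ℝ × ℝ) × ℝ => p.2 / ((p.1.1 + p.1.2) / p.1.1)) ⁻¹' Ioi t)
        = Ioi (t * ((p.1 + p.2) / p.1)) := by
      ext w
      simp only [mem_preimage, mem_Ioi]
      exact lt_div_iff₀ hk
    rw [hset, exp_tail (mul_nonneg ht hk.le)]
  rw [lintegral_congr_ae step1]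
  have hgm : Measurable fun p : ℝ × ℝ =>
      ENNReal.ofReal (Real.exp (-(t * ((p.1 + p.2) / p.1)))) := by
    apply Measurable.ennreal_ofReal
    exact ((((measurable_fst.add measurable_snd).div measurable_fst).const_mul t).neg.exp)
  rw [lintegral_prod _ hgm.aemeasurable]
  have step2 : ∀ᵐ x ∂(gammaLaw r 1),
      (∫⁻ y, ENNReal.ofReal (Real.exp (-(t * ((x + y) / x)))) ∂(gammaLaw (1 - r) 1))
        = ENNReal.ofReal (Real.exp (-t) * (x / (x + t)) ^ (1 - r)) := by
    filter_upwards [gammaLaw_ae_pos r 1] with x hx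
    exact inner_lintegral hr1 ht hx
  rw [lintegral_congr_ae step2]
  have hhm : Measurable fun x : ℝ =>
      ENNReal.ofReal (Real.exp (-t) * (x / (x + t)) ^ (1 - r)) := by
    apply Measurable.ennreal_ofReal
    apply Measurable.const_mul
    exact (Real.continuous_rpow_const (by linarith : (0:ℝ) ≤ 1 - r)).measurable.comp
      (measurable_id.div (measurable_id.add_const t))
  calc ∫⁻ x, ENNReal.ofReal (Real.exp (-t) * (x / (x + t)) ^ (1 - r)) ∂(gammaLaw r 1)
      = ∫⁻ x, ENNReal.ofReal (gammaPdf r 1 x)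
          * ENNReal.ofReal (Real.exp (-t) * (x / (x + t)) ^ (1 - r)) ∂volume :=
        lintegral_withDensity_eq_lintegral_mul _ (measurable_gammaPdf r 1).ennreal_ofReal hhm
    _ = ∫⁻ x, ENNReal.ofReal
          (gammaPdf r 1 x * (Real.exp (-t) * (x / (x + t)) ^ (1 - r))) ∂volume :=
        lintegral_congr fun x => (ENNReal.ofReal_mul (gammaPdf_nonneg hr0 one_pos x)).symm
    _ = gammaLaw r 1 (Ioi t) := outer_lintegral hr0 hr1 ht

end GleserAux

/-- Gleser representation: Let G₁ ~ Gamma(r,1), G₂ ~ Gamma(1−r,1) and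
W ~ Exponential(1) = Gamma(1,1) be independent, 0 < r < 1, and Z = (G₁+G₂)/G₁.
Then W/Z ~ Gamma(r,1). -/
theorem gleser_representation
    {Ω : Type*} [MeasurableSpace Ω] (P : Measure Ω) [IsProbabilityMeasure P]
    (r : ℝ) (hr0 : 0 < r) (hr1 : r < 1)
    (G₁ G₂ W : Ω → ℝ)
    (hG₁m : Measurable G₁) (hG₂m : Measurable G₂) (hWm : Measurable W)
    (hIndep : iIndepFun ![G₁, G₂, W] P)
    (hG₁ : Measure.map G₁ P = gammaLaw r 1)
    (hG₂ : Measure.map G₂ P = gammaLaw (1 - r) 1)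
    (hW : Measure.map W P = gammaLaw 1 1) :
    Measure.map (fun ω => W ω / ((G₁ ω + G₂ ω) / G₁ ω)) P = gammaLaw r 1 := by
  classical
  have hr2 : 0 < 1 - r := by linarith
  haveI h1 : IsProbabilityMeasure (gammaLaw r 1) := GleserAux.isProbabilityMeasure_gammaLaw hr0
  haveI h2 : IsProbabilityMeasure (gammaLaw (1 - r) 1) :=
    GleserAux.isProbabilityMeasure_gammaLaw hr2
  haveI h3 : IsProbabilityMeasure (gammaLaw 1 1) :=
    GleserAux.isProbabilityMeasure_gammaLaw one_pos
  have hmeas : ∀ i, Measurable (![G₁, G₂, W] i) := fun i => by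
    fin_cases i <;> assumption
  have h12 : IndepFun G₁ G₂ P := by
    have := hIndep.indepFun (show (0 : Fin 3) ≠ 1 by decide)
    simpa using this
  have hpairW : IndepFun (fun ω => (G₁ ω, G₂ ω)) W P := by
    have := hIndep.indepFun_prodMk hmeas 0 1 2 (by decide) (by decide)
    simpa using this
  have hmap12 : Measure.map (fun ω => (G₁ ω, G₂ ω)) P
      = (gammaLaw r 1).prod (gammaLaw (1 - r) 1) := by
    rw [← hG₁, ← hG₂]
    exact (indepFun_iff_map_prod_eq_prod_map_map hG₁m.aemeasurable hG₂m.aemeasurable).mp h12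
  have hmapAll : Measure.map (fun ω => ((G₁ ω, G₂ ω), W ω)) P
      = ((gammaLaw r 1).prod (gammaLaw (1 - r) 1)).prod (gammaLaw 1 1) := by
    rw [← hmap12, ← hW]
    exact (indepFun_iff_map_prod_eq_prod_map_map
      (hG₁m.prodMk hG₂m).aemeasurable hWm.aemeasurable).mp hpairW
  have hfm : Measurable (fun p : (ℝ × ℝ) × ℝ => p.2 / ((p.1.1 + p.1.2) / p.1.1)) :=
    measurable_snd.div ((measurable_fst.fst.add measurable_fst.snd).div measurable_fst.fst)
  have hTmap : Measure.map (fun ω => W ω / ((G₁ ω + G₂ ω) / G₁ ω)) P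
      = Measure.map (fun p : (ℝ × ℝ) × ℝ => p.2 / ((p.1.1 + p.1.2) / p.1.1))
          (((gammaLaw r 1).prod (gammaLaw (1 - r) 1)).prod (gammaLaw 1 1)) := by
    rw [← hmapAll, Measure.map_map hfm ((hG₁m.prodMk hG₂m).prodMk hWm)]
    rfl
  rw [hTmap]
  haveI : IsProbabilityMeasure
      (((gammaLaw r 1).prod (gammaLaw (1 - r) 1)).prod (gammaLaw 1 1)) := by infer_instance
  haveI : IsProbabilityMeasure
      (Measure.map (fun p : (ℝ × ℝ) × ℝ => p.2 / ((p.1.1 + p.1.2) / p.1.1))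
        (((gammaLaw r 1).prod (gammaLaw (1 - r) 1)).prod (gammaLaw 1 1))) :=
    Measure.isProbabilityMeasure_map hfm.aemeasurable
  refine Measure.ext_of_Iic _ _ (fun t => ?_)
  rcases lt_or_ge t 0 with htneg | ht
  · have hpos : ∀ᵐ p ∂(((gammaLaw r 1).prod (gammaLaw (1 - r) 1)).prod (gammaLaw 1 1)),
        0 < p.2 / ((p.1.1 + p.1.2) / p.1.1) := by
      have haeM := GleserAux.ae_prod
        ((gammaLaw r 1).prod (gammaLaw (1 - r) 1)) (gammaLaw 1 1)
        (GleserAux.ae_prod (gammaLaw r 1) (gammaLaw (1 - r) 1)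
          (GleserAux.gammaLaw_ae_pos r 1) (GleserAux.gammaLaw_ae_pos (1 - r) 1))
        (GleserAux.gammaLaw_ae_pos 1 1)
      filter_upwards [haeM] with p hp
      exact div_pos hp.2
        (div_pos (by linarith [hp.1.1, hp.1.2] : (0:ℝ) < p.1.1 + p.1.2) hp.1.1)
    rw [Measure.map_apply hfm measurableSet_Iic]
    have hz : (((gammaLaw r 1).prod (gammaLaw (1 - r) 1)).prod (gammaLaw 1 1))
        ((fun p : (ℝ × ℝ) × ℝ => p.2 / ((p.1.1 + p.1.2) / p.1.1)) ⁻¹' Iic t) = 0 := by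
      apply measure_eq_zero_iff_ae_notMem.mpr
      filter_upwards [hpos] with p hp
      simp only [mem_preimage, mem_Iic, not_le]
      linarith
    rw [hz]
    symm
    exact measure_mono_null (Iic_subset_Iic.mpr htneg.le) (GleserAux.gammaLaw_Iic_zero r 1)
  · have hIoi : Measure.map (fun p : (ℝ × ℝ) × ℝ => p.2 / ((p.1.1 + p.1.2) / p.1.1))
        (((gammaLaw r 1).prod (gammaLaw (1 - r) 1)).prod (gammaLaw 1 1)) (Ioi t)
        = gammaLaw r 1 (Ioi t) := by
      rw [Measure.map_apply hfm measurableSet_Ioi]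
      exact GleserAux.tail_eq hr0 hr1 ht
    have key : ∀ (μ : Measure ℝ) [IsProbabilityMeasure μ], μ (Iic t) = 1 - μ (Ioi t) := by
      intro μ _
      rw [show Iic t = (Ioi t)ᶜ from compl_Ioi.symm,
        measure_compl measurableSet_Ioi (measure_ne_top _ _), measure_univ]
    rw [key _, key _, hIoi]

end
end

section
/- Let W₁ ~ Exponential(1) and X ~ Standard Normal, independent. Then W₁ has the same distribution as |X|·√(2W₁'), where W₁' ~ Exponential(1) is independent of X. Equivalently, for all x ≥ 0, P(|X|√(2W) ≤ x) = 1 − e^{−x}. -/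
open MeasureTheory ProbabilityTheory Real Set

lemma hasDerivWithinAt_sub_div (x : ℝ) {t : ℝ} (ht : t ∈ Ioi (0:ℝ)) :
    HasDerivWithinAt (fun t : ℝ => t - x / t) (1 + x / t ^ 2) (Ioi 0) t := by
  have ht' : t ≠ 0 := ne_of_gt ht
  have h := (hasDerivAt_id t).sub ((hasDerivAt_inv ht').const_mul x)
  have : 1 - x * (-(t ^ 2)⁻¹) = 1 + x / t ^ 2 := by field_simp; ring
  rw [← this]
  have e : (fun t : ℝ => t - x / t) = (id - fun y => x * y⁻¹) := by
    funext s; simp [div_eq_mul_inv]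
  rw [e]; exact h.hasDerivWithinAt

lemma injOn_sub_div {x : ℝ} (hx : 0 < x) :
    InjOn (fun t : ℝ => t - x / t) (Ioi 0) := by
  intro a ha b hb hab
  simp only [mem_Ioi] at ha hb
  simp only at hab
  have h : (a - b) * (1 + x / (a * b)) = 0 := by field_simp at hab ⊢; nlinarith
  have hpos : 0 < 1 + x / (a * b) := by positivity
  have := mul_eq_zero.mp h
  rcases this with h1 | h2
  · linarith
  · linarith

lemma image_sub_div {x : ℝ} (hx : 0 < x) :
    (fun t : ℝ => t - x / t) '' (Ioi 0) = univ := by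
  apply eq_univ_of_forall
  intro u
  have hs : 0 < Real.sqrt (u ^ 2 + 4 * x) := Real.sqrt_pos.mpr (by nlinarith)
  set s := Real.sqrt (u ^ 2 + 4 * x) with hsdef
  have hs2 : s ^ 2 = u ^ 2 + 4 * x := Real.sq_sqrt (by nlinarith)
  have hsu : |u| < s := by
    have : |u| = Real.sqrt (u ^ 2) := (Real.sqrt_sq_eq_abs u).symm
    rw [this]
    exact Real.sqrt_lt_sqrt (by positivity) (by nlinarith)
  have htpos : 0 < (u + s) / 2 := by
    have := neg_lt_of_abs_lt hsu
    linarith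
  refine ⟨(u + s) / 2, htpos, ?_⟩
  have ht2 : ((u + s) / 2) ^ 2 - x = u * ((u + s) / 2) := by nlinarith
  have hne : (u + s) / 2 ≠ 0 := ne_of_gt htpos
  show (u + s) / 2 - x / ((u + s) / 2) = u
  have : (u + s) / 2 - x / ((u + s) / 2) = (((u + s) / 2) ^ 2 - x) / ((u + s) / 2) := by
    rw [sub_div, sq, mul_div_assoc, div_self hne, mul_one]
  rw [this, ht2, mul_div_assoc, div_self hne, mul_one]

lemma integrableOn_glasser {x : ℝ} (hx : 0 < x) :
    IntegrableOn (fun t : ℝ => exp (-(t - x / t) ^ 2 / 2)) (Ioi 0) := by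
  have hmeas : Measurable (fun t : ℝ => exp (-(t - x / t) ^ 2 / 2)) := by
    fun_prop
  refine Integrable.mono' (g := fun t => exp x * exp (-(1/2) * t ^ 2)) ?_
    hmeas.aestronglyMeasurable ?_
  · exact ((integrable_exp_neg_mul_sq (by norm_num : (0:ℝ) < 1/2)).const_mul _).restrict
  · filter_upwards [ae_restrict_mem measurableSet_Ioi] with t ht
    simp only [mem_Ioi] at ht
    rw [norm_eq_abs, abs_of_pos (exp_pos _), ← Real.exp_add]
    apply exp_le_exp.mpr
    have h1 : (t - x / t) ^ 2 = t ^ 2 - 2 * x + (x / t) ^ 2 := by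
      field_simp; ring
    nlinarith [sq_nonneg (x / t)]

lemma glasser {x : ℝ} (hx : 0 < x) :
    ∫ t in Ioi (0:ℝ), exp (-(t - x / t) ^ 2 / 2) = Real.sqrt (2 * π) / 2 := by
  set G : ℝ → ℝ := fun t => exp (-(t - x / t) ^ 2 / 2) with hG
  -- substitution 2 : full integral
  have hsub2 : ∫ u : ℝ, exp (-u ^ 2 / 2)
      = ∫ t in Ioi (0:ℝ), |1 + x / t ^ 2| * exp (-(t - x / t) ^ 2 / 2) := by
    rw [← setIntegral_univ, ← image_sub_div hx]
    exact integral_image_eq_integral_abs_deriv_smul measurableSet_Ioi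
      (fun t ht => hasDerivWithinAt_sub_div x ht) (injOn_sub_div hx) _
  have hgauss : ∫ u : ℝ, exp (-u ^ 2 / 2) = Real.sqrt (2 * π) := by
    have h := integral_gaussian (1/2 : ℝ)
    have he : (fun u : ℝ => rexp (-u ^ 2 / 2)) = fun u => rexp (-(1/2 : ℝ) * u ^ 2) := by
      funext u; ring_nf
    rw [he, h, show π / (1/2 : ℝ) = 2 * π by ring]
  -- substitution 1 : t ↦ x / t
  have hder1 : ∀ t ∈ Ioi (0:ℝ), HasDerivWithinAt (fun t : ℝ => x / t) (-(x / t ^ 2)) (Ioi 0) t := by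
    intro t ht
    have ht' : t ≠ 0 := ne_of_gt ht
    have h := (hasDerivAt_inv ht').const_mul x
    have : x * (-(t ^ 2)⁻¹) = -(x / t ^ 2) := by field_simp
    simpa [div_eq_mul_inv, this] using h.hasDerivWithinAt
  have hinj1 : InjOn (fun t : ℝ => x / t) (Ioi 0) := by
    intro a ha b hb hab
    simp only [mem_Ioi] at ha hb
    simp only at hab
    field_simp at hab
    linarith
  have himg1 : (fun t : ℝ => x / t) '' (Ioi 0) = Ioi 0 := by
    apply Subset.antisymm
    · rintro _ ⟨t, ht, rfl⟩
      exact div_pos hx ht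
    · intro u hu
      exact ⟨x / u, div_pos hx hu, by field_simp⟩
  have hkey : ∀ t ∈ Ioi (0:ℝ), G (x / t) = G t := by
    intro t ht
    have ht' : (t:ℝ) ≠ 0 := ne_of_gt ht
    simp only [hG]
    congr 2
    rw [show x / (x / t) = t by field_simp]
    ring
  have hsub1 : ∫ t in Ioi (0:ℝ), G t = ∫ t in Ioi (0:ℝ), (x / t ^ 2) * G t := by
    conv_lhs => rw [← himg1]
    rw [integral_image_eq_integral_abs_deriv_smul measurableSet_Ioi hder1 hinj1 G]
    refine setIntegral_congr_fun measurableSet_Ioi fun t ht => ?_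
    have ht' : (0:ℝ) < t := ht
    rw [smul_eq_mul, abs_neg, abs_of_pos (by positivity : (0:ℝ) < x / t ^ 2), hkey t ht]
  -- integrability of (x / t^2) * G t on Ioi 0
  have hint1 : IntegrableOn G (Ioi 0) := integrableOn_glasser hx
  have hint2 : IntegrableOn (fun t : ℝ => (x / t ^ 2) * G t) (Ioi 0) := by
    have := (integrableOn_image_iff_integrableOn_abs_deriv_smul measurableSet_Ioi hder1 hinj1
      G).mp (by rw [himg1]; exact hint1)
    refine this.congr_fun (fun t ht => ?_) measurableSet_Ioi
    have ht' : (0:ℝ) < t := ht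
    beta_reduce
    rw [smul_eq_mul, abs_neg, abs_of_pos (by positivity : (0:ℝ) < x / t ^ 2), hkey t ht]
  -- combine
  have hsplit : ∫ t in Ioi (0:ℝ), |1 + x / t ^ 2| * exp (-(t - x / t) ^ 2 / 2)
      = (∫ t in Ioi (0:ℝ), G t) + ∫ t in Ioi (0:ℝ), (x / t ^ 2) * G t := by
    rw [← integral_add hint1 hint2]
    refine setIntegral_congr_fun measurableSet_Ioi fun t ht => ?_
    have ht' : (0:ℝ) < t := ht
    rw [abs_of_pos (by positivity : (0:ℝ) < 1 + x / t ^ 2)]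
    simp only [hG]
    ring
  have : Real.sqrt (2 * π) = 2 * ∫ t in Ioi (0:ℝ), G t := by
    rw [← hgauss, hsub2, hsplit, ← hsub1]; ring
  linarith [this]

lemma integral_glasser_full {x : ℝ} (hx : 0 < x) :
    ∫ t : ℝ, exp (-t ^ 2 / 2 - x ^ 2 / (2 * t ^ 2)) = Real.sqrt (2 * π) * exp (-x) := by
  have habs : (fun t : ℝ => exp (-t ^ 2 / 2 - x ^ 2 / (2 * t ^ 2)))
      = fun t => (fun s : ℝ => exp (-s ^ 2 / 2 - x ^ 2 / (2 * s ^ 2))) |t| := by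
    funext t; simp [sq_abs]
  rw [habs, integral_comp_abs (f := fun s : ℝ => exp (-s ^ 2 / 2 - x ^ 2 / (2 * s ^ 2)))]
  have h2 : ∫ t in Ioi (0:ℝ), exp (-t ^ 2 / 2 - x ^ 2 / (2 * t ^ 2))
      = ∫ t in Ioi (0:ℝ), exp (-x) * exp (-(t - x / t) ^ 2 / 2) := by
    refine setIntegral_congr_fun measurableSet_Ioi fun t ht => ?_
    have ht' : (t:ℝ) ≠ 0 := ne_of_gt ht
    rw [← Real.exp_add]
    congr 1
    field_simp
    ring
  rw [h2, integral_const_mul, glasser hx]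
  ring

/-- Let X be standard normal and W standard exponential, independent.
Then |X|·√(2W) is standard exponential: for all x ≥ 0, P(|X|√(2W) ≤ x) = 1 − e^{−x}. -/
theorem abs_normal_sqrt_two_exponential
    {Ω : Type*} [MeasurableSpace Ω] (P : Measure Ω) [IsProbabilityMeasure P]
    (X W : Ω → ℝ) (hXm : Measurable X) (hWm : Measurable W)
    (hX : Measure.map X P = gaussianReal 0 1)
    (hW : ∀ x : ℝ, 0 ≤ x → (P {ω | W ω ≤ x}).toReal = 1 - Real.exp (-x))
    (hInd : IndepFun X W P) :
    ∀ x : ℝ, 0 ≤ x →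
      (P {ω | |X ω| * Real.sqrt (2 * W ω) ≤ x}).toReal = 1 - Real.exp (-x) := by
  intro x hx0
  haveI : IsProbabilityMeasure (expMeasure 1) := isProbabilityMeasure_expMeasure one_pos
  -- P (W ≤ 0) = 0
  have hW0 : P {ω | W ω ≤ 0} = 0 := by
    have h := hW 0 le_rfl
    simp only [neg_zero, Real.exp_zero, sub_self] at h
    exact (ENNReal.toReal_eq_zero_iff _).mp h |>.resolve_right (measure_ne_top _ _)
  -- law of W
  have hWmap : Measure.map W P = expMeasure 1 := by
    refine Measure.ext_of_Iic _ _ (fun a => ?_)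
    rw [Measure.map_apply hWm measurableSet_Iic]
    have hpre : W ⁻¹' Iic a = {ω | W ω ≤ a} := rfl
    by_cases ha : 0 ≤ a
    · have h1 : (P {ω | W ω ≤ a}).toReal = 1 - Real.exp (-a) := hW a ha
      have h2 : ((expMeasure 1) (Iic a)).toReal = 1 - Real.exp (-a) := by
        have h := cdf_expMeasure_eq one_pos a
        rw [cdf_eq_real, measureReal_def] at h
        simpa [ha] using h
      rw [hpre]
      exact (ENNReal.toReal_eq_toReal_iff' (measure_ne_top _ _) (measure_ne_top _ _)).mp
        (h1.trans h2.symm)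
    · push_neg at ha
      have hsub : {ω | W ω ≤ a} ⊆ {ω | W ω ≤ 0} := fun ω h => le_trans h ha.le
      have h1 : P {ω | W ω ≤ a} = 0 :=
        le_antisymm (hW0 ▸ measure_mono hsub) zero_le
      have h2 : ((expMeasure 1) (Iic a)).toReal = 0 := by
        have h := cdf_expMeasure_eq one_pos a
        rw [cdf_eq_real, measureReal_def] at h
        simpa [not_le.mpr ha] using h
      rw [hpre, h1]
      exact ((ENNReal.toReal_eq_zero_iff _).mp h2 |>.resolve_right (measure_ne_top _ _)).symm
  -- joint law
  have hjoint : Measure.map (fun ω => (X ω, W ω)) P = (gaussianReal 0 1).prod (expMeasure 1) := by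
    rw [← hX, ← hWmap]
    exact (indepFun_iff_map_prod_eq_prod_map_map hXm.aemeasurable hWm.aemeasurable).mp hInd
  have hgauss0 : (gaussianReal 0 1) {0} = 0 :=
    gaussianReal_absolutelyContinuous 0 one_ne_zero (measure_singleton 0)
  rcases hx0.eq_or_lt with rfl | hx
  · -- x = 0 case
    have hXzero : P {ω | X ω = 0} = 0 := by
      have h : P (X ⁻¹' {0}) = (gaussianReal 0 1) {0} := by
        rw [← hX, Measure.map_apply hXm (measurableSet_singleton 0)]
      rw [show {ω | X ω = 0} = X ⁻¹' {0} from rfl, h, hgauss0]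
    have hsub : {ω | |X ω| * Real.sqrt (2 * W ω) ≤ 0}
        ⊆ {ω | X ω = 0} ∪ {ω | W ω ≤ 0} := by
      intro ω h
      simp only [mem_setOf_eq, mem_union] at h ⊢
      have h1 : 0 ≤ |X ω| := abs_nonneg _
      have h2 : 0 ≤ Real.sqrt (2 * W ω) := Real.sqrt_nonneg _
      have heq : |X ω| * Real.sqrt (2 * W ω) = 0 := le_antisymm h (mul_nonneg h1 h2)
      rcases mul_eq_zero.mp heq with h | h
      · exact Or.inl (abs_eq_zero.mp h)
      · exact Or.inr (by have := Real.sqrt_eq_zero'.mp h; linarith)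
    have hz : P {ω | |X ω| * Real.sqrt (2 * W ω) ≤ 0} = 0 := by
      refine le_antisymm (le_trans (measure_mono hsub) ?_) zero_le
      calc P ({ω | X ω = 0} ∪ {ω | W ω ≤ 0}) ≤ P {ω | X ω = 0} + P {ω | W ω ≤ 0} :=
        measure_union_le _ _
      _ = 0 := by rw [hXzero, hW0, add_zero]
    rw [hz]
    simp
  · -- x > 0 case
    set S : Set (ℝ × ℝ) := {p : ℝ × ℝ | |p.1| * Real.sqrt (2 * p.2) ≤ x} with hS
    have hSm : MeasurableSet S := by
      apply measurableSet_le ?_ measurable_const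
      fun_prop
    have hPeq : P {ω | |X ω| * Real.sqrt (2 * W ω) ≤ x}
        = ((gaussianReal 0 1).prod (expMeasure 1)) S := by
      rw [← hjoint, Measure.map_apply (hXm.prodMk hWm) hSm]
      rfl
    rw [hPeq, Measure.prod_apply hSm]
    -- sections
    have hexp_Iic : ∀ c : ℝ, 0 ≤ c →
        (expMeasure 1) (Iic c) = ENNReal.ofReal (1 - Real.exp (-c)) := by
      intro c hc
      have h := cdf_expMeasure_eq one_pos c
      rw [cdf_eq_real, measureReal_def] at h
      simp only [hc, if_true, one_mul] at h
      rw [← ENNReal.ofReal_toReal (measure_ne_top (expMeasure 1) (Iic c)), h]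
    have hsection : ∀ t : ℝ, t ≠ 0 →
        (Prod.mk t ⁻¹' S) = Iic (x ^ 2 / (2 * t ^ 2)) := by
      intro t ht
      ext w
      simp only [hS, mem_preimage, mem_setOf_eq, mem_Iic]
      have habs : (0:ℝ) < |t| := abs_pos.mpr ht
      rw [mul_comm, ← le_div_iff₀ habs, Real.sqrt_le_iff]
      have hd : 0 ≤ x / |t| := le_of_lt (div_pos hx habs)
      have heq : x ^ 2 / (2 * t ^ 2) = (x / |t|) ^ 2 / 2 := by
        rw [div_pow, sq_abs]; ring
      constructor
      · rintro ⟨-, h⟩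
        rw [heq]
        linarith
      · intro h
        refine ⟨hd, ?_⟩
        rw [heq] at h
        linarith
    have hae : ∀ᵐ t ∂(gaussianReal 0 1),
        (expMeasure 1) (Prod.mk t ⁻¹' S)
          = ENNReal.ofReal (1 - Real.exp (-(x ^ 2 / (2 * t ^ 2)))) := by
      rw [ae_iff]
      refine measure_mono_null (fun t ht => ?_) hgauss0
      simp only [mem_setOf_eq] at ht ⊢
      by_contra ht0
      exact ht (by rw [hsection t ht0, hexp_Iic _ (by positivity)])
    rw [lintegral_congr_ae hae, gaussianReal_of_var_ne_zero 0 one_ne_zero,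
      lintegral_withDensity_eq_lintegral_mul _ (measurable_gaussianPDF 0 1) (by fun_prop)]
    have hptwise : ∀ t : ℝ, (gaussianPDF 0 1 * fun t =>
          ENNReal.ofReal (1 - Real.exp (-(x ^ 2 / (2 * t ^ 2))))) t
        = ENNReal.ofReal (gaussianPDFReal 0 1 t * (1 - Real.exp (-(x ^ 2 / (2 * t ^ 2))))) := by
      intro t
      simp only [Pi.mul_apply, gaussianPDF]
      rw [← ENNReal.ofReal_mul (gaussianPDFReal_nonneg 0 1 t)]
    rw [lintegral_congr hptwise]
    -- nonnegativity of integrand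
    have hfrac_nonneg : ∀ t : ℝ, (0:ℝ) ≤ x ^ 2 / (2 * t ^ 2) := by
      intro t
      positivity
    have hnn : ∀ t : ℝ, 0 ≤ gaussianPDFReal 0 1 t * (1 - Real.exp (-(x ^ 2 / (2 * t ^ 2)))) := by
      intro t
      apply mul_nonneg (gaussianPDFReal_nonneg 0 1 t)
      have : Real.exp (-(x ^ 2 / (2 * t ^ 2))) ≤ 1 := by
        rw [Real.exp_le_one_iff]
        linarith [hfrac_nonneg t]
      linarith
    -- integrability
    have hpdf_int : Integrable (gaussianPDFReal 0 1) := integrable_gaussianPDFReal 0 1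
    have hmeas2 : Measurable fun t : ℝ =>
        gaussianPDFReal 0 1 t * (1 - Real.exp (-(x ^ 2 / (2 * t ^ 2)))) := by
      exact (measurable_gaussianPDFReal 0 1).mul (by fun_prop)
    have hint : Integrable fun t : ℝ =>
        gaussianPDFReal 0 1 t * (1 - Real.exp (-(x ^ 2 / (2 * t ^ 2)))) := by
      refine hpdf_int.mono' hmeas2.aestronglyMeasurable ?_
      filter_upwards with t
      rw [Real.norm_eq_abs, abs_of_nonneg (hnn t)]
      have h1 : 1 - Real.exp (-(x ^ 2 / (2 * t ^ 2))) ≤ 1 := by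
        have := Real.exp_pos (-(x ^ 2 / (2 * t ^ 2)))
        linarith
      calc gaussianPDFReal 0 1 t * (1 - Real.exp (-(x ^ 2 / (2 * t ^ 2))))
          ≤ gaussianPDFReal 0 1 t * 1 :=
            mul_le_mul_of_nonneg_left h1 (gaussianPDFReal_nonneg 0 1 t)
        _ = gaussianPDFReal 0 1 t := mul_one _
    rw [← ofReal_integral_eq_lintegral_ofReal hint (Filter.Eventually.of_forall hnn)]
    -- compute the integral
    have hprod_int : Integrable fun t : ℝ =>
        gaussianPDFReal 0 1 t * Real.exp (-(x ^ 2 / (2 * t ^ 2))) := by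
      refine hpdf_int.mono' ((measurable_gaussianPDFReal 0 1).mul
        (by fun_prop)).aestronglyMeasurable ?_
      filter_upwards with t
      rw [Real.norm_eq_abs, abs_of_nonneg (mul_nonneg (gaussianPDFReal_nonneg 0 1 t)
        (Real.exp_nonneg _))]
      have h1 : Real.exp (-(x ^ 2 / (2 * t ^ 2))) ≤ 1 := by
        rw [Real.exp_le_one_iff]; linarith [hfrac_nonneg t]
      calc gaussianPDFReal 0 1 t * Real.exp (-(x ^ 2 / (2 * t ^ 2)))
          ≤ gaussianPDFReal 0 1 t * 1 :=
            mul_le_mul_of_nonneg_left h1 (gaussianPDFReal_nonneg 0 1 t)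
        _ = gaussianPDFReal 0 1 t := mul_one _
    have hval : ∫ t : ℝ, gaussianPDFReal 0 1 t * (1 - Real.exp (-(x ^ 2 / (2 * t ^ 2))))
        = 1 - Real.exp (-x) := by
      have hsplit : (fun t : ℝ => gaussianPDFReal 0 1 t * (1 - Real.exp (-(x ^ 2 / (2 * t ^ 2)))))
          = fun t => gaussianPDFReal 0 1 t
            - gaussianPDFReal 0 1 t * Real.exp (-(x ^ 2 / (2 * t ^ 2))) := by
        funext t; ring
      rw [hsplit, integral_sub hpdf_int hprod_int, integral_gaussianPDFReal_eq_one 0 one_ne_zero]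
      congr 1
      have hform : ∀ t : ℝ, gaussianPDFReal 0 1 t * Real.exp (-(x ^ 2 / (2 * t ^ 2)))
          = (Real.sqrt (2 * Real.pi))⁻¹ * Real.exp (-t ^ 2 / 2 - x ^ 2 / (2 * t ^ 2)) := by
        intro t
        rw [gaussianPDFReal]
        simp only [NNReal.coe_one, mul_one, sub_zero]
        rw [mul_assoc, ← Real.exp_add]
        congr 1 <;> ring
      rw [show (fun t : ℝ => gaussianPDFReal 0 1 t * Real.exp (-(x ^ 2 / (2 * t ^ 2))))
          = fun t => (Real.sqrt (2 * Real.pi))⁻¹ * Real.exp (-t ^ 2 / 2 - x ^ 2 / (2 * t ^ 2))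
          from funext hform]
      rw [integral_const_mul, integral_glasser_full hx]
      rw [← mul_assoc, inv_mul_cancel₀ (ne_of_gt (Real.sqrt_pos.mpr (by positivity))), one_mul]
    rw [hval, ENNReal.toReal_ofReal]
    have : Real.exp (-x) ≤ 1 := by
      rw [Real.exp_le_one_iff]; linarith
    linarith
end
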